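/- arXiv:2410.20786 — 2 statements merged into one kernel-verified Lean document; each statement's English description precedes it below -/
import Mathlib

section
/- Adversarial interior-point reward-budget bound (Proposition 5.2, reward part): in a finite discounted MDP, let δ > 0, t > 0, ε_R ≥ 0, and let R : S → A → ℝ be a reward signal. Suppose a min-cost stage π_0, …, π_{n2} satisfies for every i < n2: (π_i s a = 0 → π_{i+1} s a = 0), D̄_KL(π_{i+1}‖π_i) ≤ δ, J_R(π_i) + (1/(1−γ)) · 𝔸_R(π_i, π_{i+1}) ≥ J_R(π_0), and ε_R(π_i, π_{i+1}) ≤ ε_R; and a subsequent max-reward stage σ_0 = π_{n2}, σ_1, …, σ_{n1} satisfies for every i < n1: (σ_i s a = 0 → σ_{i+1} s a = 0), D̄_KL(σ_{i+1}‖σ_i) ≤ δ, 𝔸_R(σ_i, σ_{i+1}) ≥ −1/t, and ε_R(σ_i, σ_{i+1}) ≤ ε_R. Then J_R(σ_{n1}) − J_R(π_0) ≥ − n1/((1−γ)·t) − (√(2δ) · γ / (1−γ)²) · (n1 + n2) · ε_R. -/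
open Real BigOperators

/-- Induced transition matrix of policy `pol`: `P_pol(s,s') = ∑ a, pol s a * P s a s'`. -/
noncomputable def transMat {S A : Type*} [Fintype A] (P : S → A → S → ℝ)
    (pol : S → A → ℝ) : Matrix S S ℝ :=
  fun s s' => ∑ a, pol s a * P s a s'

/-- Discounted state visitation distribution
`d_pol(s) = (1-γ) ∑ₜ γ^t ∑_{s0} ρ0 s0 * (P_pol^t)(s0,s)`. -/
noncomputable def dVisit {S A : Type*} [Fintype S] [DecidableEq S] [Fintype A]
    (P : S → A → S → ℝ) (γ : ℝ) (ρ0 : S → ℝ) (pol : S → A → ℝ) (s : S) : ℝ :=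
  (1 - γ) * ∑' t : ℕ, γ ^ t * ∑ s0, ρ0 s0 * (transMat P pol ^ t) s0 s

/-- Value function of signal `F` under policy `pol`. -/
noncomputable def Vfun {S A : Type*} [Fintype S] [DecidableEq S] [Fintype A]
    (P : S → A → S → ℝ) (γ : ℝ) (F : S → A → ℝ) (pol : S → A → ℝ) (s : S) : ℝ :=
  ∑' t : ℕ, γ ^ t * ∑ s', (transMat P pol ^ t) s s' * ∑ a, pol s' a * F s' a

/-- Return `J_F(pol) = ∑ s, ρ0 s * V_F^pol(s)`. -/
noncomputable def Jret {S A : Type*} [Fintype S] [DecidableEq S] [Fintype A]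
    (P : S → A → S → ℝ) (γ : ℝ) (ρ0 : S → ℝ) (F : S → A → ℝ) (pol : S → A → ℝ) : ℝ :=
  ∑ s, ρ0 s * Vfun P γ F pol s

/-- Action-value function `Q_F^pol(s,a) = F s a + γ ∑_{s'} P s a s' * V_F^pol(s')`. -/
noncomputable def Qfun {S A : Type*} [Fintype S] [DecidableEq S] [Fintype A]
    (P : S → A → S → ℝ) (γ : ℝ) (F : S → A → ℝ) (pol : S → A → ℝ) (s : S) (a : A) : ℝ :=
  F s a + γ * ∑ s', P s a s' * Vfun P γ F pol s'

/-- Advantage function `A_F^pol(s,a) = Q_F^pol(s,a) - V_F^pol(s)`. -/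
noncomputable def Adv {S A : Type*} [Fintype S] [DecidableEq S] [Fintype A]
    (P : S → A → S → ℝ) (γ : ℝ) (F : S → A → ℝ) (pol : S → A → ℝ) (s : S) (a : A) : ℝ :=
  Qfun P γ F pol s a - Vfun P γ F pol s

/-- Expected surrogate advantage
`𝔸_F(pol,pol') = ∑ s, d_pol(s) ∑ a, pol' s a * A_F^pol(s,a)`. -/
noncomputable def surrAdv {S A : Type*} [Fintype S] [DecidableEq S] [Fintype A]
    (P : S → A → S → ℝ) (γ : ℝ) (ρ0 : S → ℝ) (F : S → A → ℝ)
    (pol pol' : S → A → ℝ) : ℝ :=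
  ∑ s, dVisit P γ ρ0 pol s * ∑ a, pol' s a * Adv P γ F pol s a

/-- `ε_F(pol,pol') = max_s |∑ a, pol' s a * A_F^pol(s,a)|`. -/
noncomputable def epsAdv {S A : Type*} [Fintype S] [DecidableEq S] [Fintype A] [Nonempty S]
    (P : S → A → S → ℝ) (γ : ℝ) (F : S → A → ℝ) (pol pol' : S → A → ℝ) : ℝ :=
  Finset.univ.sup' Finset.univ_nonempty fun s => |∑ a, pol' s a * Adv P γ F pol s a|

/-- Per-state KL divergence `KL(pol'‖pol)(s) = ∑ a, pol' s a * log (pol' s a / pol s a)`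
(with the convention `0 * log 0 = 0`, automatic since `Real.log 0 = 0`). -/
noncomputable def klState {S A : Type*} [Fintype A] (pol' pol : S → A → ℝ) (s : S) : ℝ :=
  ∑ a, pol' s a * Real.log (pol' s a / pol s a)

/-- Averaged KL divergence `D̄_KL(pol'‖pol) = ∑ s, d_pol(s) * KL(pol'‖pol)(s)`. -/
noncomputable def avgKL {S A : Type*} [Fintype S] [DecidableEq S] [Fintype A]
    (P : S → A → S → ℝ) (γ : ℝ) (ρ0 : S → ℝ) (pol' pol : S → A → ℝ) : ℝ :=
  ∑ s, dVisit P γ ρ0 pol s * klState pol' pol s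


set_option linter.unusedSectionVars false
set_option maxHeartbeats 1000000


lemma my_log_ge_one (x : ℝ) (hx : 1 ≤ x) :
    3*(x^2-1)/(x^2+4*x+1) ≤ Real.log x := by
  have hmono : MonotoneOn (fun y : ℝ => Real.log y - 3*(y^2-1)/(y^2+4*y+1)) (Set.Ici 1) := by
    apply monotoneOn_of_deriv_nonneg (convex_Ici 1)
    · apply ContinuousOn.sub
      · exact Real.continuousOn_log.mono (by intro y hy; simp at hy ⊢; linarith)
      · apply ContinuousOn.div (by fun_prop) (by fun_prop)
        intro y hy; simp at hy; nlinarith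
    · intro y hy
      simp only [interior_Ici, Set.mem_Ioi] at hy
      apply DifferentiableAt.differentiableWithinAt
      apply DifferentiableAt.sub
      · exact Real.differentiableAt_log (by linarith)
      · apply DifferentiableAt.div (by fun_prop) (by fun_prop); nlinarith
    · intro y hy
      simp only [interior_Ici, Set.mem_Ioi] at hy
      have hy0 : (0:ℝ) < y := by linarith
      have hg : y^2+4*y+1 ≠ 0 := by nlinarith
      have h1 : HasDerivAt (fun y : ℝ => Real.log y - 3*(y^2-1)/(y^2+4*y+1))
          (1/y - (6*y*(y^2+4*y+1) - 3*(y^2-1)*(2*y+4))/(y^2+4*y+1)^2) y := by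
        have hl : HasDerivAt Real.log (1/y) y := by
          simpa [one_div] using Real.hasDerivAt_log (ne_of_gt hy0)
        have hn : HasDerivAt (fun y : ℝ => 3*(y^2-1)) (6*y) y := by
          have := (hasDerivAt_pow 2 y).const_mul (3:ℝ)
          simpa using ((hasDerivAt_pow 2 y).sub_const 1).const_mul (3:ℝ) |>.congr_deriv (by ring)
        have hd : HasDerivAt (fun y : ℝ => y^2+4*y+1) (2*y+4) y := by
          simpa using (((hasDerivAt_pow 2 y).add ((hasDerivAt_id y).const_mul 4)).add_const 1).congr_deriv (by ring)
        exact hl.sub (hn.div hd hg)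
      rw [h1.deriv]
      have heq : 1/y - (6*y*(y^2+4*y+1) - 3*(y^2-1)*(2*y+4))/(y^2+4*y+1)^2
          = (y-1)^4/(y*(y^2+4*y+1)^2) := by
        field_simp; ring
      rw [heq]; positivity
  have := hmono (Set.self_mem_Ici) (Set.mem_Ici.2 hx) hx
  simp at this; linarith

lemma my_log_ge_le_one (x : ℝ) (hx0 : 0 < x) (hx : x ≤ 1) :
    (x-1)*(5*x+1)/(2*x*(x+2)) ≤ Real.log x := by
  have hanti : AntitoneOn (fun y : ℝ => Real.log y - (y-1)*(5*y+1)/(2*y*(y+2))) (Set.Icc x 1) := by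
    apply antitoneOn_of_deriv_nonpos (convex_Icc x 1)
    · apply ContinuousOn.sub
      · exact Real.continuousOn_log.mono (by intro y hy; simp at hy ⊢; nlinarith)
      · apply ContinuousOn.div (by fun_prop) (by fun_prop)
        intro y hy; simp at hy; nlinarith
    · intro y hy
      rw [interior_Icc] at hy
      obtain ⟨hy1, hy2⟩ := hy
      have hy0 : (0:ℝ) < y := lt_trans hx0 hy1
      apply DifferentiableAt.differentiableWithinAt
      apply DifferentiableAt.sub
      · exact Real.differentiableAt_log (ne_of_gt hy0)
      · apply DifferentiableAt.div (by fun_prop) (by fun_prop); nlinarith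
    · intro y hy
      rw [interior_Icc] at hy
      obtain ⟨hy1, hy2⟩ := hy
      have hy0 : (0:ℝ) < y := lt_trans hx0 hy1
      have hg : 2*y*(y+2) ≠ 0 := by nlinarith
      have h1 : HasDerivAt (fun y : ℝ => Real.log y - (y-1)*(5*y+1)/(2*y*(y+2)))
          (1/y - ((10*y-4)*(2*y*(y+2)) - ((y-1)*(5*y+1))*(4*y+4))/(2*y*(y+2))^2) y := by
        have hl : HasDerivAt Real.log (1/y) y := by
          simpa [one_div] using Real.hasDerivAt_log (ne_of_gt hy0)
        have hn : HasDerivAt (fun y : ℝ => (y-1)*(5*y+1)) (10*y-4) y := by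
          have := ((hasDerivAt_id y).sub_const 1).mul (((hasDerivAt_id y).const_mul 5).add_const 1)
          simpa [id_eq, Pi.mul_def] using this.congr_deriv (by simp [id_eq]; ring)
        have hd : HasDerivAt (fun y : ℝ => 2*y*(y+2)) (4*y+4) y := by
          have := (((hasDerivAt_id y).const_mul 2)).mul ((hasDerivAt_id y).add_const 2)
          simpa [id_eq, Pi.mul_def] using this.congr_deriv (by simp [id_eq]; ring)
        exact hl.sub (hn.div hd hg)
      rw [h1.deriv]
      have heq : 1/y - ((10*y-4)*(2*y*(y+2)) - ((y-1)*(5*y+1))*(4*y+4))/(2*y*(y+2))^2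
          = (y-1)^3/(y^2*(y+2)^2) := by
        field_simp; ring
      rw [heq]
      apply div_nonpos_of_nonpos_of_nonneg
      · have h3 : (y-1)^3 = (y-1)*(y-1)^2 := by ring
        rw [h3]; exact mul_nonpos_of_nonpos_of_nonneg (by linarith) (sq_nonneg _)
      · positivity
  have := hanti (Set.mem_Icc.2 ⟨le_refl x, hx⟩) (Set.mem_Icc.2 ⟨hx, le_refl 1⟩) hx
  simp at this; linarith


lemma my_scalar_key (x : ℝ) (hx : 0 < x) :
    3*(x-1)^2/(2*(x+2)) ≤ x * Real.log x - x + 1 := by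
  rcases le_total 1 x with h | h
  · have hl := my_log_ge_one x h
    have hid : x*(3*(x^2-1)/(x^2+4*x+1)) - x + 1 - 3*(x-1)^2/(2*(x+2))
        = (x-1)^4/(2*(x+2)*(x^2+4*x+1)) := by
      have h1 : x^2+4*x+1 ≠ 0 := by nlinarith
      have h2 : x+2 ≠ 0 := by nlinarith
      field_simp; ring
    have hge : 0 ≤ (x-1)^4/(2*(x+2)*(x^2+4*x+1)) := by positivity
    nlinarith [mul_le_mul_of_nonneg_left hl (le_of_lt hx)]
  · have hl := my_log_ge_le_one x hx h
    have hid : x*((x-1)*(5*x+1)/(2*x*(x+2))) - x + 1 - 3*(x-1)^2/(2*(x+2)) = 0 := by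
      have h1 : x ≠ 0 := ne_of_gt hx
      have h2 : x+2 ≠ 0 := by nlinarith
      field_simp; ring
    nlinarith [mul_le_mul_of_nonneg_left hl (le_of_lt hx)]

lemma my_pointwise_kl (p q : ℝ) (hp : 0 ≤ p) (hq : 0 ≤ q) (habs : q = 0 → p = 0) :
    p - q + 3*(p-q)^2/(2*(p+2*q)) ≤ p * Real.log (p/q) := by
  rcases eq_or_lt_of_le hq with hq0 | hq0
  · have hp0 := habs hq0.symm
    simp [← hq0, hp0]
  rcases eq_or_lt_of_le hp with hp0 | hp0
  · rw [← hp0]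
    simp only [zero_mul, zero_sub, zero_add]
    have : (3:ℝ)*(-q)^2/(2*(0+2*q)) = 3*q/4 := by
      rw [neg_pow]; field_simp; ring
    have h4 : (3:ℝ)*(-q)^2/(2*(2*q)) = 3*q/4 := by
      field_simp; ring
    linarith
  · have hx : 0 < p/q := div_pos hp0 hq0
    have key := my_scalar_key (p/q) hx
    have e1 : p * Real.log (p/q) = q * ((p/q) * Real.log (p/q)) := by
      field_simp
    have e2 : q * (3*(p/q-1)^2/(2*(p/q+2))) = 3*(p-q)^2/(2*(p+2*q)) := by
      have hq' : q ≠ 0 := ne_of_gt hq0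
      have h2 : p + 2*q ≠ 0 := by nlinarith
      field_simp
    have := mul_le_mul_of_nonneg_left key (le_of_lt hq0)
    rw [e2] at this
    have e3 : q * ((p/q) * Real.log (p/q) - (p/q) + 1) = p * Real.log (p/q) - p + q := by
      field_simp
    rw [e3] at this
    linarith

lemma my_pinsker {A : Type*} [Fintype A] (p q : A → ℝ)
    (hp : ∀ a, 0 ≤ p a) (hq : ∀ a, 0 ≤ q a)
    (hp1 : ∑ a, p a = 1) (hq1 : ∑ a, q a = 1)
    (habs : ∀ a, q a = 0 → p a = 0) :
    ∑ a, |p a - q a| ≤ Real.sqrt (2 * ∑ a, p a * Real.log (p a / q a)) := by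
  set K := ∑ a, p a * Real.log (p a / q a) with hK
  have hsum : ∑ a, (p a - q a + 3*(p a - q a)^2/(2*(p a + 2*q a))) ≤ K :=
    Finset.sum_le_sum (fun a _ => my_pointwise_kl (p a) (q a) (hp a) (hq a) (habs a))
  have hchi : ∑ a, 3*(p a - q a)^2/(2*(p a + 2*q a)) ≤ K := by
    have : ∑ a, (p a - q a + 3*(p a - q a)^2/(2*(p a + 2*q a)))
        = ∑ a, (p a - q a) + ∑ a, 3*(p a - q a)^2/(2*(p a + 2*q a)) := by
      rw [← Finset.sum_add_distrib]
    rw [this, Finset.sum_sub_distrib, hp1, hq1] at hsum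
    linarith
  -- Cauchy-Schwarz
  have hcs := Finset.sum_sq_le_sum_mul_sum_of_sq_eq_mul Finset.univ
      (r := fun a => |p a - q a|) (f := fun a => (p a + 2*q a)/3)
      (g := fun a => 3*(p a - q a)^2/(p a + 2*q a))
      (fun a _ => by have := hp a; have := hq a; positivity)
      (fun a _ => by have hd : 0 ≤ p a + 2*q a := by have := hp a; have := hq a; linarith
                     positivity)
      (fun a _ => by
        rcases eq_or_lt_of_le (by have := hp a; have := hq a; linarith : (0:ℝ) ≤ p a + 2*q a) with h0 | h0
        · have hqa : q a = 0 := by have := hp a; have := hq a; linarith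
          have hpa : p a = 0 := habs a hqa
          simp [hpa, hqa]
        · rw [sq_abs]; field_simp
          exact (mul_div_cancel_right₀ _ (ne_of_gt (by linarith))).symm)
  have hf1 : ∑ a, (p a + 2*q a)/3 = 1 := by
    rw [← Finset.sum_div, Finset.sum_add_distrib, hp1, ← Finset.mul_sum, hq1]
    norm_num
  have hg2 : ∑ a, 3*(p a - q a)^2/(p a + 2*q a) ≤ 2*K := by
    have : ∀ a : A, 3*(p a - q a)^2/(p a + 2*q a) = 2 * (3*(p a - q a)^2/(2*(p a + 2*q a))) := by
      intro a
      rcases eq_or_ne (p a + 2*q a) 0 with h0 | h0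
      · simp [h0]
      · field_simp
    rw [Finset.sum_congr rfl (fun a _ => this a), ← Finset.mul_sum]
    linarith
  have hsq : (∑ a, |p a - q a|)^2 ≤ 2*K := by
    calc (∑ a, |p a - q a|)^2 ≤ (∑ a, (p a + 2*q a)/3) * ∑ a, 3*(p a - q a)^2/(p a + 2*q a) := hcs
    _ = ∑ a, 3*(p a - q a)^2/(p a + 2*q a) := by rw [hf1, one_mul]
    _ ≤ 2*K := hg2
  have h0 : 0 ≤ ∑ a, |p a - q a| := Finset.sum_nonneg (fun a _ => abs_nonneg _)
  calc ∑ a, |p a - q a| = Real.sqrt ((∑ a, |p a - q a|)^2) := (Real.sqrt_sq h0).symm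
  _ ≤ Real.sqrt (2*K) := Real.sqrt_le_sqrt hsq

section Stoch
variable {S : Type*} [Fintype S] [DecidableEq S]

def MyRowStoch (M : Matrix S S ℝ) : Prop :=
  (∀ s s', 0 ≤ M s s') ∧ ∀ s, ∑ s', M s s' = 1

lemma myRowStoch_one : MyRowStoch (1 : Matrix S S ℝ) := by
  constructor
  · intro s s'
    rw [Matrix.one_apply]
    positivity
  · intro s
    simp [Matrix.one_apply]

lemma myRowStoch_mul {M N : Matrix S S ℝ} (hM : MyRowStoch M) (hN : MyRowStoch N) :
    MyRowStoch (M * N) := by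
  constructor
  · intro s s'
    rw [Matrix.mul_apply]
    exact Finset.sum_nonneg fun u _ => mul_nonneg (hM.1 s u) (hN.1 u s')
  · intro s
    simp only [Matrix.mul_apply]
    rw [Finset.sum_comm]
    calc ∑ u, ∑ s', M s u * N u s' = ∑ u, M s u * ∑ s', N u s' := by
          simp [Finset.mul_sum]
      _ = 1 := by simp only [hN.2, mul_one]; exact hM.2 s

lemma myRowStoch_pow {M : Matrix S S ℝ} (hM : MyRowStoch M) (t : ℕ) : MyRowStoch (M ^ t) := by
  induction t with
  | zero => simpa using myRowStoch_one
  | succ n ih => rw [pow_succ]; exact myRowStoch_mul ih hM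

lemma myRowStoch_le_one {M : Matrix S S ℝ} (hM : MyRowStoch M) (s s' : S) : M s s' ≤ 1 := by
  calc M s s' ≤ ∑ u, M s u :=
        Finset.single_le_sum (fun u _ => hM.1 s u) (Finset.mem_univ s')
    _ = 1 := hM.2 s

end Stoch

lemma myRowStoch_transMat {S A : Type*} [Fintype S] [DecidableEq S] [Fintype A]
    {P : S → A → S → ℝ} (hP0 : ∀ s a s', 0 ≤ P s a s') (hP1 : ∀ s a, ∑ s', P s a s' = 1)
    {pol : S → A → ℝ} (h0 : ∀ s a, 0 ≤ pol s a) (h1 : ∀ s, ∑ a, pol s a = 1) :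
    MyRowStoch (transMat P pol) := by
  constructor
  · intro s s'
    simp only [transMat]
    exact Finset.sum_nonneg fun a _ => mul_nonneg (h0 s a) (hP0 s a s')
  · intro s
    simp only [transMat]
    rw [Finset.sum_comm]
    calc ∑ a, ∑ s', pol s a * P s a s' = ∑ a, pol s a * ∑ s', P s a s' := by
          simp [Finset.mul_sum]
      _ = 1 := by simp only [hP1, mul_one]; exact h1 s

lemma my_summable {γ : ℝ} (h0 : 0 ≤ γ) (h1 : γ < 1) {f : ℕ → ℝ} {C : ℝ}
    (hf : ∀ t, |f t| ≤ C) : Summable (fun t => γ ^ t * f t) := by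
  apply Summable.of_norm_bounded
    ((summable_geometric_of_lt_one h0 h1).mul_left C)
  intro t
  rw [Real.norm_eq_abs, abs_mul, abs_pow, abs_of_nonneg h0]
  calc γ ^ t * |f t| ≤ γ ^ t * C := by
        apply mul_le_mul_of_nonneg_left (hf t) (by positivity)
    _ = C * γ ^ t := mul_comm _ _

section Bellman
variable {S A : Type*} [Fintype S] [DecidableEq S] [Fintype A]
variable {P : S → A → S → ℝ} {γ : ℝ} {ρ0 : S → ℝ} {F : S → A → ℝ} {pol : S → A → ℝ}

lemma my_matvec_abs_le {N : Matrix S S ℝ} (hN : MyRowStoch N) (g : S → ℝ) (s : S) :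
    |∑ s', N s s' * g s'| ≤ ∑ s', |g s'| := by
  calc |∑ s', N s s' * g s'| ≤ ∑ s', |N s s' * g s'| := Finset.abs_sum_le_sum_abs _ _
    _ ≤ ∑ s', |g s'| := by
      apply Finset.sum_le_sum
      intro s' _
      rw [abs_mul, abs_of_nonneg (hN.1 s s')]
      calc N s s' * |g s'| ≤ 1 * |g s'| :=
            mul_le_mul_of_nonneg_right (myRowStoch_le_one hN s s') (abs_nonneg _)
        _ = |g s'| := one_mul _

lemma my_vecmat_abs_le {N : Matrix S S ℝ} (hN : MyRowStoch N) (g : S → ℝ) (s : S) :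
    |∑ s0, g s0 * N s0 s| ≤ ∑ s0, |g s0| := by
  calc |∑ s0, g s0 * N s0 s| ≤ ∑ s0, |g s0 * N s0 s| := Finset.abs_sum_le_sum_abs _ _
    _ ≤ ∑ s0, |g s0| := by
      apply Finset.sum_le_sum
      intro s0 _
      rw [abs_mul, abs_of_nonneg (hN.1 s0 s)]
      calc |g s0| * N s0 s ≤ |g s0| * 1 :=
            mul_le_mul_of_nonneg_left (myRowStoch_le_one hN s0 s) (abs_nonneg _)
        _ = |g s0| := mul_one _

lemma my_summable_V (hP0 : ∀ s a s', 0 ≤ P s a s') (hP1 : ∀ s a, ∑ s', P s a s' = 1)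
    (hγ0 : 0 < γ) (hγ1 : γ < 1)
    (h0 : ∀ s a, 0 ≤ pol s a) (h1 : ∀ s, ∑ a, pol s a = 1) (s : S) :
    Summable (fun t : ℕ =>
      γ ^ t * ∑ s', (transMat P pol ^ t) s s' * ∑ a, pol s' a * F s' a) := by
  apply my_summable (le_of_lt hγ0) hγ1 (C := ∑ s', |∑ a, pol s' a * F s' a|)
  intro t
  exact my_matvec_abs_le (myRowStoch_pow (myRowStoch_transMat hP0 hP1 h0 h1) t) _ s

lemma my_summable_d (hP0 : ∀ s a s', 0 ≤ P s a s') (hP1 : ∀ s a, ∑ s', P s a s' = 1)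
    (hγ0 : 0 < γ) (hγ1 : γ < 1)
    (h0 : ∀ s a, 0 ≤ pol s a) (h1 : ∀ s, ∑ a, pol s a = 1) (s : S) :
    Summable (fun t : ℕ => γ ^ t * ∑ s0, ρ0 s0 * (transMat P pol ^ t) s0 s) := by
  apply my_summable (le_of_lt hγ0) hγ1 (C := ∑ s0, |ρ0 s0|)
  intro t
  exact my_vecmat_abs_le (myRowStoch_pow (myRowStoch_transMat hP0 hP1 h0 h1) t) _ s

lemma my_vfun_bellman (hP0 : ∀ s a s', 0 ≤ P s a s') (hP1 : ∀ s a, ∑ s', P s a s' = 1)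
    (hγ0 : 0 < γ) (hγ1 : γ < 1)
    (h0 : ∀ s a, 0 ≤ pol s a) (h1 : ∀ s, ∑ a, pol s a = 1) (s : S) :
    Vfun P γ F pol s = (∑ a, pol s a * F s a)
      + γ * ∑ s', transMat P pol s s' * Vfun P γ F pol s' := by
  have hsum := my_summable_V (F := F) hP0 hP1 hγ0 hγ1 h0 h1
  rw [Vfun, Summable.tsum_eq_zero_add (hsum s)]
  congr 1
  · simp [Matrix.one_apply]
  · have step : ∀ t : ℕ, γ ^ (t+1) * ∑ s', (transMat P pol ^ (t+1)) s s' * ∑ a, pol s' a * F s' a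
        = γ * ∑ u, transMat P pol s u *
            (γ ^ t * ∑ s', (transMat P pol ^ t) u s' * ∑ a, pol s' a * F s' a) := by
      intro t
      rw [pow_succ' (transMat P pol) t, pow_succ' γ t]
      simp only [Matrix.mul_apply, Finset.sum_mul]
      rw [Finset.sum_comm]
      simp only [Finset.mul_sum]
      refine Finset.sum_congr rfl fun u _ => ?_
      refine Finset.sum_congr rfl fun s' _ => ?_
      try ring
    rw [tsum_congr step, tsum_mul_left]
    congr 1
    rw [Summable.tsum_finsetSum (fun u _ => ((hsum u).mul_left (transMat P pol s u)))]
    apply Finset.sum_congr rfl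
    intro u _
    rw [tsum_mul_left]
    rfl

lemma my_dvisit_bellman (hP0 : ∀ s a s', 0 ≤ P s a s') (hP1 : ∀ s a, ∑ s', P s a s' = 1)
    (hγ0 : 0 < γ) (hγ1 : γ < 1)
    (h0 : ∀ s a, 0 ≤ pol s a) (h1 : ∀ s, ∑ a, pol s a = 1) (s : S) :
    dVisit P γ ρ0 pol s = (1-γ) * ρ0 s
      + γ * ∑ s0, dVisit P γ ρ0 pol s0 * transMat P pol s0 s := by
  have hsum := my_summable_d (ρ0 := ρ0) hP0 hP1 hγ0 hγ1 h0 h1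
  have hT : (∑' t : ℕ, γ ^ t * ∑ s0, ρ0 s0 * (transMat P pol ^ t) s0 s)
      = ρ0 s + γ * ∑ u, (∑' t : ℕ, γ ^ t * ∑ s0, ρ0 s0 * (transMat P pol ^ t) s0 u)
          * transMat P pol u s := by
    rw [Summable.tsum_eq_zero_add (hsum s)]
    congr 1
    · simp [Matrix.one_apply]
    · have step : ∀ t : ℕ, γ ^ (t+1) * ∑ s0, ρ0 s0 * (transMat P pol ^ (t+1)) s0 s
          = γ * ∑ u, (γ ^ t * ∑ s0, ρ0 s0 * (transMat P pol ^ t) s0 u) * transMat P pol u s := by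
        intro t
        rw [pow_succ (transMat P pol) t, pow_succ' γ t]
        simp only [Matrix.mul_apply, Finset.mul_sum, Finset.sum_mul]
        rw [Finset.sum_comm]
        refine Finset.sum_congr rfl fun u _ => ?_
        refine Finset.sum_congr rfl fun s0 _ => ?_
        ring
      rw [tsum_congr step, tsum_mul_left]
      congr 1
      rw [Summable.tsum_finsetSum (fun u _ => ((hsum u).mul_right (transMat P pol u s)))]
      refine Finset.sum_congr rfl fun u _ => ?_
      rw [tsum_mul_right]
  simp only [dVisit]
  rw [hT]
  rw [Finset.mul_sum, Finset.mul_sum]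
  have : ∀ u : S, (1-γ) * ((∑' t : ℕ, γ ^ t * ∑ s0, ρ0 s0 * (transMat P pol ^ t) s0 u)
      * transMat P pol u s)
      = ((1-γ) * ∑' t : ℕ, γ ^ t * ∑ s0, ρ0 s0 * (transMat P pol ^ t) s0 u)
        * transMat P pol u s := by intro u; ring
  rw [mul_add]
  congr 1
  rw [← Finset.mul_sum, ← Finset.mul_sum]
  rw [mul_left_comm]
  congr 1
  rw [Finset.mul_sum]
  exact Finset.sum_congr rfl fun u _ => this u

lemma my_dvisit_nonneg (hP0 : ∀ s a s', 0 ≤ P s a s') (hγ0 : 0 < γ) (hγ1 : γ < 1)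
    (hP1 : ∀ s a, ∑ s', P s a s' = 1) (hρ0 : ∀ s, 0 ≤ ρ0 s)
    (h0 : ∀ s a, 0 ≤ pol s a) (h1 : ∀ s, ∑ a, pol s a = 1) (s : S) :
    0 ≤ dVisit P γ ρ0 pol s := by
  apply mul_nonneg (by linarith)
  apply tsum_nonneg
  intro t
  apply mul_nonneg (by positivity)
  apply Finset.sum_nonneg
  intro s0 _
  apply mul_nonneg (hρ0 s0)
  exact (myRowStoch_pow (myRowStoch_transMat hP0 hP1 h0 h1) t).1 s0 s

lemma my_dvisit_sum_one (hP0 : ∀ s a s', 0 ≤ P s a s') (hP1 : ∀ s a, ∑ s', P s a s' = 1)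
    (hγ0 : 0 < γ) (hγ1 : γ < 1) (hρ1 : ∑ s, ρ0 s = 1)
    (h0 : ∀ s a, 0 ≤ pol s a) (h1 : ∀ s, ∑ a, pol s a = 1) :
    ∑ s, dVisit P γ ρ0 pol s = 1 := by
  have hsum := my_summable_d (ρ0 := ρ0) hP0 hP1 hγ0 hγ1 h0 h1
  simp only [dVisit]
  rw [← Finset.mul_sum]
  rw [← Summable.tsum_finsetSum (fun s _ => hsum s)]
  have : ∀ t : ℕ, (∑ s, γ ^ t * ∑ s0, ρ0 s0 * (transMat P pol ^ t) s0 s) = γ ^ t := by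
    intro t
    rw [← Finset.mul_sum]
    rw [Finset.sum_comm]
    have : ∀ s0 : S, (∑ s, ρ0 s0 * (transMat P pol ^ t) s0 s) = ρ0 s0 := by
      intro s0
      rw [← Finset.mul_sum, (myRowStoch_pow (myRowStoch_transMat hP0 hP1 h0 h1) t).2 s0,
        mul_one]
    rw [Finset.sum_congr rfl fun s0 _ => this s0, hρ1, mul_one]
  rw [tsum_congr this, tsum_geometric_of_lt_one (le_of_lt hγ0) hγ1]
  exact mul_inv_cancel₀ (by linarith)

lemma my_sum_d_mul (hP0 : ∀ s a s', 0 ≤ P s a s') (hP1 : ∀ s a, ∑ s', P s a s' = 1)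
    (hγ0 : 0 < γ) (hγ1 : γ < 1)
    (h0 : ∀ s a, 0 ≤ pol s a) (h1 : ∀ s, ∑ a, pol s a = 1) :
    ∑ s, dVisit P γ ρ0 pol s * (∑ a, pol s a * F s a) = (1-γ) * Jret P γ ρ0 F pol := by
  have hsumd := my_summable_d (ρ0 := ρ0) hP0 hP1 hγ0 hγ1 h0 h1
  have hsumV := my_summable_V (F := F) hP0 hP1 hγ0 hγ1 h0 h1
  simp only [dVisit, Jret, Vfun]
  have e1 : ∀ s : S, ((1-γ) * ∑' t : ℕ, γ ^ t * ∑ s0, ρ0 s0 * (transMat P pol ^ t) s0 s)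
        * (∑ a, pol s a * F s a)
      = (1-γ) * ∑' t : ℕ, (γ ^ t * ∑ s0, ρ0 s0 * (transMat P pol ^ t) s0 s)
        * (∑ a, pol s a * F s a) := by
    intro s
    rw [tsum_mul_right]
    ring
  rw [Finset.sum_congr rfl fun s _ => e1 s, ← Finset.mul_sum]
  congr 1
  rw [← Summable.tsum_finsetSum (fun s _ => (hsumd s).mul_right _)]
  have e2 : ∀ t : ℕ, (∑ s, (γ ^ t * ∑ s0, ρ0 s0 * (transMat P pol ^ t) s0 s)
        * (∑ a, pol s a * F s a))
      = ∑ s0, ρ0 s0 * (γ ^ t * ∑ s, (transMat P pol ^ t) s0 s * (∑ a, pol s a * F s a)) := by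
    intro t
    have l1 : ∀ s : S, (γ ^ t * ∑ s0, ρ0 s0 * (transMat P pol ^ t) s0 s)
          * (∑ a, pol s a * F s a)
        = ∑ s0, ρ0 s0 * (γ ^ t * ((transMat P pol ^ t) s0 s * ∑ a, pol s a * F s a)) := by
      intro s
      calc (γ ^ t * ∑ s0, ρ0 s0 * (transMat P pol ^ t) s0 s) * (∑ a, pol s a * F s a)
          = ∑ s0, (ρ0 s0 * (transMat P pol ^ t) s0 s)
              * (γ ^ t * ∑ a, pol s a * F s a) := by rw [← Finset.sum_mul]; ring
        _ = ∑ s0, ρ0 s0 * (γ ^ t * ((transMat P pol ^ t) s0 s * ∑ a, pol s a * F s a)) :=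
            Finset.sum_congr rfl fun s0 _ => by ring
    have l2 : ∀ s0 : S, ρ0 s0 * (γ ^ t * ∑ s, (transMat P pol ^ t) s0 s
          * ∑ a, pol s a * F s a)
        = ∑ s, ρ0 s0 * (γ ^ t * ((transMat P pol ^ t) s0 s * ∑ a, pol s a * F s a)) := by
      intro s0
      symm
      rw [← Finset.mul_sum, ← Finset.mul_sum]
    rw [Finset.sum_congr rfl fun s _ => l1 s, Finset.sum_congr rfl fun s0 _ => l2 s0]
    apply Finset.sum_comm
  rw [tsum_congr e2, Summable.tsum_finsetSum (fun s0 _ => (hsumV s0).mul_left (ρ0 s0))]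
  refine Finset.sum_congr rfl fun s0 _ => ?_
  exact tsum_mul_left

end Bellman

section Main
variable {S A : Type*} [Fintype S] [DecidableEq S] [Fintype A]
variable {P : S → A → S → ℝ} {γ : ℝ} {ρ0 : S → ℝ} {F : S → A → ℝ} {pol pol' : S → A → ℝ}

lemma my_abar (h1' : ∀ s, ∑ a, pol' s a = 1) (s : S) :
    ∑ a, pol' s a * Adv P γ F pol s a
      = (∑ a, pol' s a * F s a)
        + γ * (∑ s', transMat P pol' s s' * Vfun P γ F pol s')
        - Vfun P γ F pol s := by
  have mid : ∑ a, pol' s a * ∑ s', P s a s' * Vfun P γ F pol s'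
      = ∑ s', transMat P pol' s s' * Vfun P γ F pol s' := by
    simp only [transMat, Finset.sum_mul, Finset.mul_sum]
    rw [Finset.sum_comm]
    exact Finset.sum_congr rfl fun a _ => Finset.sum_congr rfl fun s' _ => by ring
  calc ∑ a, pol' s a * Adv P γ F pol s a
      = ∑ a, (pol' s a * F s a
          + γ * (pol' s a * ∑ s', P s a s' * Vfun P γ F pol s')
          - pol' s a * Vfun P γ F pol s) := by
        refine Finset.sum_congr rfl fun a _ => ?_
        simp only [Adv, Qfun]; ring
    _ = (∑ a, pol' s a * F s a)
        + γ * (∑ a, pol' s a * ∑ s', P s a s' * Vfun P γ F pol s')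
        - (∑ a, pol' s a) * Vfun P γ F pol s := by
        rw [Finset.sum_sub_distrib, Finset.sum_add_distrib, ← Finset.mul_sum,
          ← Finset.sum_mul]
    _ = _ := by rw [mid, h1' s, one_mul]

lemma my_perf_diff (hP0 : ∀ s a s', 0 ≤ P s a s') (hP1 : ∀ s a, ∑ s', P s a s' = 1)
    (hγ0 : 0 < γ) (hγ1 : γ < 1)
    (h0' : ∀ s a, 0 ≤ pol' s a) (h1' : ∀ s, ∑ a, pol' s a = 1) :
    ∑ s, dVisit P γ ρ0 pol' s * (∑ a, pol' s a * Adv P γ F pol s a)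
      = (1-γ) * (Jret P γ ρ0 F pol' - Jret P γ ρ0 F pol) := by
  have hd := my_dvisit_bellman (ρ0 := ρ0) hP0 hP1 hγ0 hγ1 h0' h1'
  calc ∑ s, dVisit P γ ρ0 pol' s * (∑ a, pol' s a * Adv P γ F pol s a)
      = ∑ s, (dVisit P γ ρ0 pol' s * (∑ a, pol' s a * F s a)
        + (∑ s', dVisit P γ ρ0 pol' s * (γ * (transMat P pol' s s' * Vfun P γ F pol s')))
        - dVisit P γ ρ0 pol' s * Vfun P γ F pol s) := by
        refine Finset.sum_congr rfl fun s _ => ?_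
        rw [my_abar h1']
        rw [← Finset.mul_sum, ← Finset.mul_sum]
        ring
    _ = (∑ s, dVisit P γ ρ0 pol' s * (∑ a, pol' s a * F s a))
        + (∑ s', (∑ s, dVisit P γ ρ0 pol' s * (γ * (transMat P pol' s s' * Vfun P γ F pol s'))))
        - ∑ s, dVisit P γ ρ0 pol' s * Vfun P γ F pol s := by
        rw [Finset.sum_sub_distrib, Finset.sum_add_distrib, Finset.sum_comm]
    _ = (1-γ) * Jret P γ ρ0 F pol'
        + ((∑ s', dVisit P γ ρ0 pol' s' * Vfun P γ F pol s') - (1-γ) * Jret P γ ρ0 F pol)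
        - ∑ s, dVisit P γ ρ0 pol' s * Vfun P γ F pol s := by
        have hterm : ∀ s' : S,
            ∑ s, dVisit P γ ρ0 pol' s * (γ * (transMat P pol' s s' * Vfun P γ F pol s'))
            = dVisit P γ ρ0 pol' s' * Vfun P γ F pol s'
              - (1-γ) * (ρ0 s' * Vfun P γ F pol s') := by
          intro s'
          have e : ∑ s, dVisit P γ ρ0 pol' s * (γ * (transMat P pol' s s' * Vfun P γ F pol s'))
              = (γ * ∑ s, dVisit P γ ρ0 pol' s * transMat P pol' s s') * Vfun P γ F pol s' := by
            rw [Finset.mul_sum, Finset.sum_mul]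
            refine Finset.sum_congr rfl fun s _ => ?_
            ring
          rw [e]
          have := hd s'
          have e2 : γ * ∑ s, dVisit P γ ρ0 pol' s * transMat P pol' s s'
              = dVisit P γ ρ0 pol' s' - (1-γ) * ρ0 s' := by linarith
          rw [e2]
          ring
        have hmid : ∑ s' : S,
            ∑ s, dVisit P γ ρ0 pol' s * (γ * (transMat P pol' s s' * Vfun P γ F pol s'))
            = (∑ s', dVisit P γ ρ0 pol' s' * Vfun P γ F pol s') - (1-γ) * Jret P γ ρ0 F pol := by
          rw [Finset.sum_congr rfl fun s' _ => hterm s', Finset.sum_sub_distrib]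
          congr 1
          simp only [Jret]
          rw [Finset.mul_sum]
        rw [my_sum_d_mul hP0 hP1 hγ0 hγ1 h0' h1', hmid]
    _ = (1-γ) * (Jret P γ ρ0 F pol' - Jret P γ ρ0 F pol) := by ring

end Main

section L1
variable {S A : Type*} [Fintype S] [DecidableEq S] [Fintype A]
variable {P : S → A → S → ℝ} {γ : ℝ} {ρ0 : S → ℝ} {pol pol' : S → A → ℝ}

lemma my_row_l1 (hP0 : ∀ s a s', 0 ≤ P s a s') (hP1 : ∀ s a, ∑ s', P s a s' = 1) (s0 : S) :
    ∑ s, |transMat P pol' s0 s - transMat P pol s0 s| ≤ ∑ a, |pol' s0 a - pol s0 a| := by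
  have e : ∀ s : S, transMat P pol' s0 s - transMat P pol s0 s
      = ∑ a, (pol' s0 a - pol s0 a) * P s0 a s := by
    intro s
    simp only [transMat, ← Finset.sum_sub_distrib]
    exact Finset.sum_congr rfl fun a _ => by ring
  calc ∑ s, |transMat P pol' s0 s - transMat P pol s0 s|
      ≤ ∑ s, ∑ a, |pol' s0 a - pol s0 a| * P s0 a s := by
        refine Finset.sum_le_sum fun s _ => ?_
        rw [e s]
        calc |∑ a, (pol' s0 a - pol s0 a) * P s0 a s|
            ≤ ∑ a, |(pol' s0 a - pol s0 a) * P s0 a s| := Finset.abs_sum_le_sum_abs _ _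
          _ = ∑ a, |pol' s0 a - pol s0 a| * P s0 a s := by
              refine Finset.sum_congr rfl fun a _ => ?_
              rw [abs_mul, abs_of_nonneg (hP0 s0 a s)]
    _ = ∑ a, |pol' s0 a - pol s0 a| * ∑ s, P s0 a s := by
        rw [Finset.sum_comm]
        exact Finset.sum_congr rfl fun a _ => by rw [Finset.mul_sum]
    _ = ∑ a, |pol' s0 a - pol s0 a| := by
        refine Finset.sum_congr rfl fun a _ => ?_
        rw [hP1 s0 a, mul_one]

lemma my_l1_bound (hP0 : ∀ s a s', 0 ≤ P s a s') (hP1 : ∀ s a, ∑ s', P s a s' = 1)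
    (hγ0 : 0 < γ) (hγ1 : γ < 1) (hρ0 : ∀ s, 0 ≤ ρ0 s)
    (h0 : ∀ s a, 0 ≤ pol s a) (h1 : ∀ s, ∑ a, pol s a = 1)
    (h0' : ∀ s a, 0 ≤ pol' s a) (h1' : ∀ s, ∑ a, pol' s a = 1) :
    ∑ s, |dVisit P γ ρ0 pol' s - dVisit P γ ρ0 pol s|
      ≤ γ/(1-γ) * ∑ s, dVisit P γ ρ0 pol s * ∑ a, |pol' s a - pol s a| := by
  have h1γ : (0:ℝ) < 1 - γ := by linarith
  have hb := my_dvisit_bellman (ρ0 := ρ0) hP0 hP1 hγ0 hγ1 h0 h1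
  have hb' := my_dvisit_bellman (ρ0 := ρ0) hP0 hP1 hγ0 hγ1 h0' h1'
  have hM' := myRowStoch_transMat hP0 hP1 h0' h1'
  set d := dVisit P γ ρ0 pol
  set d' := dVisit P γ ρ0 pol'
  set M := transMat P pol
  set M' := transMat P pol'
  have key : ∀ s, |d' s - d s| ≤ γ * ((∑ s0, |d' s0 - d s0| * M' s0 s)
      + ∑ s0, d s0 * |M' s0 s - M s0 s|) := by
    intro s
    have hdec : d' s - d s = γ * ((∑ s0, (d' s0 - d s0) * M' s0 s)
        + ∑ s0, d s0 * (M' s0 s - M s0 s)) := by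
      have e : (∑ s0, (d' s0 - d s0) * M' s0 s) + ∑ s0, d s0 * (M' s0 s - M s0 s)
          = (∑ s0, d' s0 * M' s0 s) - ∑ s0, d s0 * M s0 s := by
        rw [← Finset.sum_add_distrib, ← Finset.sum_sub_distrib]
        exact Finset.sum_congr rfl fun s0 _ => by ring
      rw [e, hb' s, hb s]
      ring
    rw [hdec, abs_mul, abs_of_nonneg (le_of_lt hγ0)]
    apply mul_le_mul_of_nonneg_left _ (le_of_lt hγ0)
    calc |(∑ s0, (d' s0 - d s0) * M' s0 s) + ∑ s0, d s0 * (M' s0 s - M s0 s)|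
        ≤ |∑ s0, (d' s0 - d s0) * M' s0 s| + |∑ s0, d s0 * (M' s0 s - M s0 s)| := abs_add_le _ _
      _ ≤ (∑ s0, |d' s0 - d s0| * M' s0 s) + ∑ s0, d s0 * |M' s0 s - M s0 s| := by
        apply add_le_add
        · calc |∑ s0, (d' s0 - d s0) * M' s0 s| ≤ ∑ s0, |(d' s0 - d s0) * M' s0 s| :=
              Finset.abs_sum_le_sum_abs _ _
            _ = ∑ s0, |d' s0 - d s0| * M' s0 s := by
              refine Finset.sum_congr rfl fun s0 _ => ?_
              rw [abs_mul, abs_of_nonneg (hM'.1 s0 s)]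
        · calc |∑ s0, d s0 * (M' s0 s - M s0 s)| ≤ ∑ s0, |d s0 * (M' s0 s - M s0 s)| :=
              Finset.abs_sum_le_sum_abs _ _
            _ = ∑ s0, d s0 * |M' s0 s - M s0 s| := by
              refine Finset.sum_congr rfl fun s0 _ => ?_
              rw [abs_mul, abs_of_nonneg (my_dvisit_nonneg hP0 hγ0 hγ1 hP1 hρ0 h0 h1 s0)]
  have hsumkey : ∑ s, |d' s - d s| ≤ γ * ((∑ s, |d' s - d s|)
      + ∑ s0, d s0 * ∑ a, |pol' s0 a - pol s0 a|) := by
    calc ∑ s, |d' s - d s|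
        ≤ ∑ s, γ * ((∑ s0, |d' s0 - d s0| * M' s0 s) + ∑ s0, d s0 * |M' s0 s - M s0 s|) :=
          Finset.sum_le_sum fun s _ => key s
      _ = γ * ((∑ s, ∑ s0, |d' s0 - d s0| * M' s0 s)
            + ∑ s, ∑ s0, d s0 * |M' s0 s - M s0 s|) := by
          rw [← Finset.mul_sum, Finset.sum_add_distrib]
      _ ≤ γ * ((∑ s, |d' s - d s|) + ∑ s0, d s0 * ∑ a, |pol' s0 a - pol s0 a|) := by
          apply mul_le_mul_of_nonneg_left _ (le_of_lt hγ0)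
          apply add_le_add
          · rw [Finset.sum_comm]
            apply le_of_eq
            refine Finset.sum_congr rfl fun s0 _ => ?_
            rw [← Finset.mul_sum, hM'.2 s0, mul_one]
          · rw [Finset.sum_comm]
            refine Finset.sum_le_sum fun s0 _ => ?_
            rw [← Finset.mul_sum]
            apply mul_le_mul_of_nonneg_left (my_row_l1 hP0 hP1 s0)
              (my_dvisit_nonneg hP0 hγ0 hγ1 hP1 hρ0 h0 h1 s0)
  rw [div_mul_eq_mul_div, le_div_iff₀ h1γ]
  nlinarith [hsumkey]

end L1

lemma my_kl_nonneg {A : Type*} [Fintype A] (p q : A → ℝ)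
    (hp : ∀ a, 0 ≤ p a) (hq : ∀ a, 0 ≤ q a)
    (hp1 : ∑ a, p a = 1) (hq1 : ∑ a, q a = 1)
    (habs : ∀ a, q a = 0 → p a = 0) :
    0 ≤ ∑ a, p a * Real.log (p a / q a) := by
  have hsum : ∑ a, (p a - q a + 3*(p a - q a)^2/(2*(p a + 2*q a)))
      ≤ ∑ a, p a * Real.log (p a / q a) :=
    Finset.sum_le_sum (fun a _ => my_pointwise_kl (p a) (q a) (hp a) (hq a) (habs a))
  have e : ∑ a, (p a - q a + 3*(p a - q a)^2/(2*(p a + 2*q a)))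
      = ∑ a, (p a - q a) + ∑ a, 3*(p a - q a)^2/(2*(p a + 2*q a)) := by
    rw [← Finset.sum_add_distrib]
  rw [e, Finset.sum_sub_distrib, hp1, hq1] at hsum
  have hnn : 0 ≤ ∑ a, 3*(p a - q a)^2/(2*(p a + 2*q a)) := by
    apply Finset.sum_nonneg
    intro a _
    have := hp a; have := hq a
    positivity
  linarith

section Step
variable {S A : Type*} [Fintype S] [DecidableEq S] [Fintype A] [Nonempty S]
variable {P : S → A → S → ℝ} {γ : ℝ} {ρ0 : S → ℝ} {F : S → A → ℝ} {pol pol' : S → A → ℝ}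

lemma my_step_bound (hP0 : ∀ s a s', 0 ≤ P s a s') (hP1 : ∀ s a, ∑ s', P s a s' = 1)
    (hγ0 : 0 < γ) (hγ1 : γ < 1)
    (hρ0 : ∀ s, 0 ≤ ρ0 s) (hρ1 : ∑ s, ρ0 s = 1)
    (h0 : ∀ s a, 0 ≤ pol s a) (h1 : ∀ s, ∑ a, pol s a = 1)
    (h0' : ∀ s a, 0 ≤ pol' s a) (h1' : ∀ s, ∑ a, pol' s a = 1)
    (habs : ∀ s a, pol s a = 0 → pol' s a = 0)
    {δ εR : ℝ} (hδ : 0 < δ) (hKL : avgKL P γ ρ0 pol' pol ≤ δ)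
    (hεR : 0 ≤ εR) (heps : epsAdv P γ F pol pol' ≤ εR) :
    Jret P γ ρ0 F pol + (1/(1-γ)) * surrAdv P γ ρ0 F pol pol'
      - (Real.sqrt (2*δ) * γ/(1-γ)^2) * εR ≤ Jret P γ ρ0 F pol' := by
  have h1γ : (0:ℝ) < 1 - γ := by linarith
  set d := dVisit P γ ρ0 pol with hdd
  set d' := dVisit P γ ρ0 pol' with hdd'
  set Ab : S → ℝ := fun s => ∑ a, pol' s a * Adv P γ F pol s a with hAb
  have hdnn : ∀ s, 0 ≤ d s := fun s => my_dvisit_nonneg hP0 hγ0 hγ1 hP1 hρ0 h0 h1 s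
  have hperf : ∑ s, d' s * Ab s = (1-γ) * (Jret P γ ρ0 F pol' - Jret P γ ρ0 F pol) :=
    my_perf_diff hP0 hP1 hγ0 hγ1 h0' h1'
  have hsplit : ∑ s, d' s * Ab s
      = surrAdv P γ ρ0 F pol pol' + ∑ s, (d' s - d s) * Ab s := by
    simp only [surrAdv]
    rw [← Finset.sum_add_distrib]
    exact Finset.sum_congr rfl fun s _ => by ring
  -- Pinsker + Jensen chain
  have hpins : ∀ s, ∑ a, |pol' s a - pol s a| ≤ Real.sqrt (2 * klState pol' pol s) := by
    intro s
    exact my_pinsker (fun a => pol' s a) (fun a => pol s a)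
      (fun a => h0' s a) (fun a => h0 s a) (h1' s) (h1 s) (fun a => habs s a)
  have hklnn : ∀ s, 0 ≤ klState pol' pol s := by
    intro s
    exact my_kl_nonneg (fun a => pol' s a) (fun a => pol s a)
      (fun a => h0' s a) (fun a => h0 s a) (h1' s) (h1 s) (fun a => habs s a)
  have hjensen : ∑ s, d s * Real.sqrt (2 * klState pol' pol s) ≤ Real.sqrt (2*δ) := by
    have hcs := Finset.sum_sq_le_sum_mul_sum_of_sq_eq_mul Finset.univ
      (r := fun s => d s * Real.sqrt (2 * klState pol' pol s))
      (f := fun s => d s)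
      (g := fun s => d s * (2 * klState pol' pol s))
      (fun s _ => hdnn s)
      (fun s _ => mul_nonneg (hdnn s) (by have := hklnn s; positivity))
      (fun s _ => by
        rw [mul_pow, Real.sq_sqrt (by have := hklnn s; positivity)]
        ring)
    have hd1 : ∑ s, d s = 1 := my_dvisit_sum_one hP0 hP1 hγ0 hγ1 hρ1 h0 h1
    have hsum2 : ∑ s, d s * (2 * klState pol' pol s) = 2 * avgKL P γ ρ0 pol' pol := by
      simp only [avgKL]
      rw [Finset.mul_sum]
      exact Finset.sum_congr rfl fun s _ => by ring
    rw [hd1, one_mul, hsum2] at hcs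
    have hnn : 0 ≤ ∑ s, d s * Real.sqrt (2 * klState pol' pol s) :=
      Finset.sum_nonneg fun s _ => mul_nonneg (hdnn s) (Real.sqrt_nonneg _)
    calc ∑ s, d s * Real.sqrt (2 * klState pol' pol s)
        = Real.sqrt ((∑ s, d s * Real.sqrt (2 * klState pol' pol s))^2) :=
          (Real.sqrt_sq hnn).symm
      _ ≤ Real.sqrt (2*δ) := Real.sqrt_le_sqrt (by linarith)
  have hN : ∑ s, |d' s - d s| ≤ γ/(1-γ) * Real.sqrt (2*δ) := by
    calc ∑ s, |d' s - d s|
        ≤ γ/(1-γ) * ∑ s, d s * ∑ a, |pol' s a - pol s a| :=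
          my_l1_bound hP0 hP1 hγ0 hγ1 hρ0 h0 h1 h0' h1'
      _ ≤ γ/(1-γ) * Real.sqrt (2*δ) := by
          apply mul_le_mul_of_nonneg_left _ (by positivity)
          calc ∑ s, d s * ∑ a, |pol' s a - pol s a|
              ≤ ∑ s, d s * Real.sqrt (2 * klState pol' pol s) :=
                Finset.sum_le_sum fun s _ =>
                  mul_le_mul_of_nonneg_left (hpins s) (hdnn s)
            _ ≤ Real.sqrt (2*δ) := hjensen
  have hAbound : ∀ s, |Ab s| ≤ εR := by
    intro s
    calc |Ab s| ≤ epsAdv P γ F pol pol' :=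
        Finset.le_sup' (f := fun s => |∑ a, pol' s a * Adv P γ F pol s a|) (Finset.mem_univ s)
      _ ≤ εR := heps
  have hE : |∑ s, (d' s - d s) * Ab s| ≤ εR * (γ/(1-γ) * Real.sqrt (2*δ)) := by
    calc |∑ s, (d' s - d s) * Ab s| ≤ ∑ s, |(d' s - d s) * Ab s| :=
        Finset.abs_sum_le_sum_abs _ _
      _ ≤ ∑ s, |d' s - d s| * εR := by
        refine Finset.sum_le_sum fun s _ => ?_
        rw [abs_mul]
        exact mul_le_mul_of_nonneg_left (hAbound s) (abs_nonneg _)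
      _ = (∑ s, |d' s - d s|) * εR := by rw [Finset.sum_mul]
      _ ≤ (γ/(1-γ) * Real.sqrt (2*δ)) * εR := mul_le_mul_of_nonneg_right hN hεR
      _ = εR * (γ/(1-γ) * Real.sqrt (2*δ)) := mul_comm _ _
  set E := ∑ s, (d' s - d s) * Ab s with hEdef
  have hkey : (1-γ) * (Jret P γ ρ0 F pol' - Jret P γ ρ0 F pol)
      = surrAdv P γ ρ0 F pol pol' + E := by rw [← hsplit, hperf]
  have e1 : Jret P γ ρ0 F pol' - Jret P γ ρ0 F pol
      = (surrAdv P γ ρ0 F pol pol' + E) * (1/(1-γ)) := by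
    rw [← hkey]; field_simp
  have e2 : (1/(1-γ)) * surrAdv P γ ρ0 F pol pol' - (Real.sqrt (2*δ) * γ/(1-γ)^2) * εR
      = (surrAdv P γ ρ0 F pol pol' - εR * (γ/(1-γ) * Real.sqrt (2*δ))) * (1/(1-γ)) := by
    field_simp
  have hElb : -(εR * (γ/(1-γ) * Real.sqrt (2*δ))) ≤ E := by
    have := neg_abs_le E
    linarith
  have hmul : (surrAdv P γ ρ0 F pol pol' - εR * (γ/(1-γ) * Real.sqrt (2*δ))) * (1/(1-γ))
      ≤ (surrAdv P γ ρ0 F pol pol' + E) * (1/(1-γ)) := by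
    apply mul_le_mul_of_nonneg_right _ (by positivity)
    linarith
  linarith [e1, e2, hmul]

end Step

/-- adversarial interior-point reward-budget bound
(Proposition 5.2, reward part). -/
theorem adversarial_interior_point_reward_bound {S A : Type*} [Fintype S] [DecidableEq S] [Fintype A] [Nonempty S] [Nonempty A]
    (P : S → A → S → ℝ) (hP0 : ∀ s a s', 0 ≤ P s a s') (hP1 : ∀ s a, ∑ s', P s a s' = 1)
    (γ : ℝ) (hγ0 : 0 < γ) (hγ1 : γ < 1)
    (ρ0 : S → ℝ) (hρ0 : ∀ s, 0 ≤ ρ0 s) (hρ1 : ∑ s, ρ0 s = 1)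
    (δ : ℝ) (hδ : 0 < δ) (t : ℝ) (ht : 0 < t) (εR : ℝ) (hεR : 0 ≤ εR) (R : S → A → ℝ)
    (n1 n2 : ℕ) (pol σ : ℕ → S → A → ℝ)
    (hpol0 : ∀ i ≤ n2, ∀ s a, 0 ≤ pol i s a)
    (hpol1 : ∀ i ≤ n2, ∀ s, ∑ a, pol i s a = 1)
    (hpabs : ∀ i < n2, ∀ s a, pol i s a = 0 → pol (i + 1) s a = 0)
    (hpKL : ∀ i < n2, avgKL P γ ρ0 (pol (i + 1)) (pol i) ≤ δ)
    (hpsurr : ∀ i < n2,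
      Jret P γ ρ0 R (pol 0) ≤
        Jret P γ ρ0 R (pol i) + (1 / (1 - γ)) * surrAdv P γ ρ0 R (pol i) (pol (i + 1)))
    (hpeps : ∀ i < n2, epsAdv P γ R (pol i) (pol (i + 1)) ≤ εR)
    (hlink : σ 0 = pol n2)
    (hσ0 : ∀ i ≤ n1, ∀ s a, 0 ≤ σ i s a)
    (hσ1 : ∀ i ≤ n1, ∀ s, ∑ a, σ i s a = 1)
    (hσabs : ∀ i < n1, ∀ s a, σ i s a = 0 → σ (i + 1) s a = 0)
    (hσKL : ∀ i < n1, avgKL P γ ρ0 (σ (i + 1)) (σ i) ≤ δ)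
    (hσA : ∀ i < n1, -(1 / t) ≤ surrAdv P γ ρ0 R (σ i) (σ (i + 1)))
    (hσeps : ∀ i < n1, epsAdv P γ R (σ i) (σ (i + 1)) ≤ εR) :
    Jret P γ ρ0 R (σ n1) - Jret P γ ρ0 R (pol 0) ≥
      - ((n1 : ℝ) / ((1 - γ) * t))
        - (Real.sqrt (2 * δ) * γ / (1 - γ) ^ 2) * ((n1 : ℝ) + (n2 : ℝ)) * εR := by
  have h1γ : (0:ℝ) < 1 - γ := by linarith
  set C : ℝ := (Real.sqrt (2*δ) * γ/(1-γ)^2) * εR with hCdef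
  have hC : 0 ≤ C := by
    apply mul_nonneg _ hεR
    positivity
  -- step bound for the max stage
  have hstep : ∀ i < n1, Jret P γ ρ0 R (σ i) - 1/((1-γ)*t) - C ≤ Jret P γ ρ0 R (σ (i+1)) := by
    intro i hi
    have hsb := my_step_bound hP0 hP1 hγ0 hγ1 hρ0 hρ1
      (hσ0 i (le_of_lt hi)) (hσ1 i (le_of_lt hi))
      (hσ0 (i+1) (Nat.succ_le_of_lt hi)) (hσ1 (i+1) (Nat.succ_le_of_lt hi))
      (hσabs i hi) hδ (hσKL i hi) hεR (hσeps i hi)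
    have hsurr := hσA i hi
    have hmul : (1/(1-γ)) * (-(1/t)) ≤ (1/(1-γ)) * surrAdv P γ ρ0 R (σ i) (σ (i+1)) :=
      mul_le_mul_of_nonneg_left hsurr (by positivity)
    have he : (1/(1-γ)) * (-(1/t)) = -(1/((1-γ)*t)) := by
      field_simp
    linarith
  -- induction over the max stage
  have hind : ∀ k, k ≤ n1 →
      Jret P γ ρ0 R (σ 0) - (k:ℝ) * (1/((1-γ)*t) + C) ≤ Jret P γ ρ0 R (σ k) := by
    intro k
    induction k with
    | zero => intro _; simp
    | succ m ih =>
      intro hm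
      have h1 := ih (le_of_lt (Nat.lt_of_succ_le hm))
      have h2 := hstep m (Nat.lt_of_succ_le hm)
      push_cast
      linarith
  have hmax := hind n1 (le_refl n1)
  -- min-cost stage
  have hmin : Jret P γ ρ0 R (pol 0) - (if n2 = 0 then 0 else C) ≤ Jret P γ ρ0 R (σ 0) := by
    rcases Nat.eq_zero_or_pos n2 with h2 | h2
    · subst h2
      simp [hlink]
    · obtain ⟨m, rfl⟩ : ∃ m, n2 = m + 1 := ⟨n2 - 1, (Nat.succ_pred_eq_of_pos h2).symm⟩
      have hm : m < m + 1 := Nat.lt_succ_self m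
      have hsb := my_step_bound hP0 hP1 hγ0 hγ1 hρ0 hρ1
        (hpol0 m (le_of_lt hm)) (hpol1 m (le_of_lt hm))
        (hpol0 (m+1) (le_refl _)) (hpol1 (m+1) (le_refl _))
        (hpabs m hm) hδ (hpKL m hm) hεR (hpeps m hm)
      have hs := hpsurr m hm
      simp only [if_neg (Nat.succ_ne_zero m)]
      rw [hlink]
      linarith
    -- final combination
  have egoal : (Real.sqrt (2*δ) * γ/(1-γ)^2) * ((n1:ℝ)+(n2:ℝ)) * εR = ((n1:ℝ)+(n2:ℝ)) * C := by
    rw [hCdef]; ring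
  have ediv : ((n1:ℝ))/((1-γ)*t) = (n1:ℝ) * (1/((1-γ)*t)) := by ring
  rw [ge_iff_le, egoal, ediv]
  rcases Nat.eq_zero_or_pos n2 with h2 | h2
  · subst h2
    rw [if_pos rfl] at hmin
    push_cast
    linarith
  · have h1le : (1:ℝ) ≤ (n2:ℝ) := by exact_mod_cast h2
    simp only [if_neg (Nat.pos_iff_ne_zero.mp h2)] at hmin
    have hn1 : (0:ℝ) ≤ (n1:ℝ) := Nat.cast_nonneg n1
    nlinarith [hmax, hmin, hC]
end

section
/- Adversarial interior-point cost-budget bound (Proposition 5.2, cost part): in a finite discounted MDP, let δ > 0, t > 0, ε_C ≥ 0, d ∈ ℝ, n1 ≥ 1, and let C : S → A → ℝ be a cost signal. Suppose a max-reward stage σ_0, …, σ_{n1} satisfies for every i < n1: (σ_i s a = 0 → σ_{i+1} s a = 0), D̄_KL(σ_{i+1}‖σ_i) ≤ δ, the cost surrogate constraint J_C(σ_i) + (1/(1−γ)) · 𝔸_C(σ_i, σ_{i+1}) ≤ d holds, and ε_C(σ_i, σ_{i+1}) ≤ ε_C; and a subsequent min-cost stage π_0 = σ_{n1}, π_1,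 …, π_{n2} satisfies for every i < n2: (π_i s a = 0 → π_{i+1} s a = 0), D̄_KL(π_{i+1}‖π_i) ≤ δ, 𝔸_C(π_i, π_{i+1}) ≤ 1/t, and ε_C(π_i, π_{i+1}) ≤ ε_C. Then J_C(π_{n2}) − d ≤ n2/((1−γ)·t) + (√(2δ) · γ / (1−γ)²) · (n1 + n2) · ε_C. -/
open Real BigOperators

/-- `(x+1) log x - 2(x-1)` is monotone on `(0,∞)`. -/
lemma aux_phi_mono : MonotoneOn (fun x : ℝ => (x + 1) * Real.log x - 2 * (x - 1))
    (Set.Ioi (0:ℝ)) := by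
  have hderiv : ∀ x ∈ interior (Set.Ioi (0:ℝ)), HasDerivAt
      (fun x : ℝ => (x + 1) * Real.log x - 2 * (x - 1))
      (Real.log x + 1/x - 1) x := by
    intro x hx
    rw [interior_Ioi] at hx
    have hx0 : (0:ℝ) < x := hx
    have h1 : HasDerivAt (fun x : ℝ => (x + 1) * Real.log x)
        (1 * Real.log x + (x + 1) * (1/x)) x := by
      have := ((hasDerivAt_id x).add_const 1).mul (Real.hasDerivAt_log (ne_of_gt hx0))
      refine this.congr_deriv ?_; simp only [id, one_div]
    have h2 : HasDerivAt (fun x : ℝ => 2 * (x - 1)) 2 x := by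
      simpa using ((hasDerivAt_id x).sub_const 1).const_mul 2
    have := h1.sub h2
    refine this.congr_deriv ?_
    have hxne : x ≠ 0 := ne_of_gt hx0
    field_simp; ring
  apply monotoneOn_of_deriv_nonneg (convex_Ioi 0)
  · apply ContinuousOn.sub
    · exact (continuousOn_id.add continuousOn_const).mul
        (Real.continuousOn_log.mono (by intro x hx; exact ne_of_gt hx))
    · fun_prop
  · intro x hx
    exact (hderiv x hx).differentiableAt.differentiableWithinAt
  · intro x hx
    rw [(hderiv x hx).deriv]
    rw [interior_Ioi] at hx
    have := Real.one_sub_inv_le_log_of_pos (show (0:ℝ) < x from hx)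
    rw [inv_eq_one_div] at this
    linarith

/-- Key inequality: `3(x-1)² ≤ 2(x+2)(x log x - x + 1)` for `x > 0`. -/
lemma aux_key_ineq {x : ℝ} (hx : 0 < x) :
    3 * (x - 1)^2 ≤ 2 * (x + 2) * (x * Real.log x - x + 1) := by
  set h : ℝ → ℝ := fun x => 2 * (x + 2) * (x * Real.log x - x + 1) - 3 * (x - 1)^2 with hh
  have hderiv : ∀ y : ℝ, 0 < y → HasDerivAt h
      (4 * ((y + 1) * Real.log y - 2 * (y - 1))) y := by
    intro y hy
    have hxlog : HasDerivAt (fun x : ℝ => x * Real.log x) (Real.log y + 1) y := by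
      have := (hasDerivAt_id y).mul (Real.hasDerivAt_log (ne_of_gt hy))
      refine this.congr_deriv ?_; rw [id, mul_inv_cancel₀ (ne_of_gt hy)]; ring
    have h1 : HasDerivAt (fun x : ℝ => 2 * (x + 2) * (x * Real.log x - x + 1))
        (2 * (y * Real.log y - y + 1) + 2 * (y + 2) * (Real.log y + 1 - 1)) y := by
      have ha : HasDerivAt (fun x : ℝ => 2 * (x + 2)) 2 y := by
        simpa using ((hasDerivAt_id y).add_const 2).const_mul 2
      have hb : HasDerivAt (fun x : ℝ => x * Real.log x - x + 1)
          (Real.log y + 1 - 1) y := by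
        simpa using (hxlog.sub (hasDerivAt_id y)).add_const 1
      have := ha.mul hb
      refine this.congr_deriv ?_; ring
    have h2 : HasDerivAt (fun x : ℝ => 3 * (x - 1)^2) (3 * (2 * (y - 1))) y := by
      have := (((hasDerivAt_id y).sub_const 1).pow 2).const_mul 3
      refine this.congr_deriv ?_; norm_num [id]
    have := h1.sub h2
    refine this.congr_deriv ?_; ring
  have hphi1 : ((1:ℝ) + 1) * Real.log 1 - 2 * (1 - 1) = 0 := by simp
  have hcont : ContinuousOn h (Set.Ioi (0:ℝ)) := by
    intro y hy
    exact ((hderiv y hy).differentiableAt.continuousAt).continuousWithinAt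
  have hmono : MonotoneOn h (Set.Ici (1:ℝ)) := by
    apply monotoneOn_of_deriv_nonneg (convex_Ici 1)
    · exact hcont.mono (fun y hy => Set.mem_Ioi.mpr (lt_of_lt_of_le one_pos hy))
    · intro y hy
      rw [interior_Ici] at hy
      exact (hderiv y (lt_trans one_pos hy)).differentiableAt.differentiableWithinAt
    · intro y hy
      rw [interior_Ici] at hy
      rw [(hderiv y (lt_trans one_pos hy)).deriv]
      have := aux_phi_mono (Set.mem_Ioi.mpr one_pos) (Set.mem_Ioi.mpr (lt_trans one_pos hy))
        (le_of_lt hy)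
      simp only [Real.log_one] at this
      nlinarith
  have hanti : AntitoneOn h (Set.Ioc (0:ℝ) 1) := by
    apply antitoneOn_of_deriv_nonpos (convex_Ioc 0 1)
    · exact hcont.mono (fun y hy => hy.1)
    · intro y hy
      rw [interior_Ioc] at hy
      exact (hderiv y hy.1).differentiableAt.differentiableWithinAt
    · intro y hy
      rw [interior_Ioc] at hy
      rw [(hderiv y hy.1).deriv]
      have := aux_phi_mono (Set.mem_Ioi.mpr hy.1) (Set.mem_Ioi.mpr one_pos) (le_of_lt hy.2)
      simp only [Real.log_one] at this
      nlinarith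
  have h1 : h 1 = 0 := by simp [hh]
  have : 0 ≤ h x := by
    rcases le_or_gt x 1 with hx1 | hx1
    · have := hanti (Set.mem_Ioc.mpr ⟨hx, hx1⟩) (Set.mem_Ioc.mpr ⟨one_pos, le_refl 1⟩) hx1
      rw [h1] at this; exact this
    · have := hmono (Set.mem_Ici.mpr (le_refl 1)) (Set.mem_Ici.mpr (le_of_lt hx1)) (le_of_lt hx1)
      rw [h1] at this; exact this
  simp only [hh] at this
  linarith

/-- Pointwise Pinsker bound: `(p-q)² ≤ (2/3)(p+2q)·(p log(p/q) - p + q)`. -/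
lemma aux_pointwise {p q : ℝ} (hp : 0 ≤ p) (hq : 0 ≤ q) (habs : q = 0 → p = 0) :
    (p - q)^2 ≤ (2/3) * (p + 2*q) * (p * Real.log (p/q) - p + q) := by
  rcases eq_or_lt_of_le hq with hq0 | hq0
  · have hp0 := habs hq0.symm
    simp [hp0, ← hq0]
  rcases eq_or_lt_of_le hp with hp0 | hp0
  · rw [← hp0]
    simp only [zero_div, Real.log_zero, mul_zero, zero_mul, zero_sub, zero_add, sub_zero, neg_sq]
    nlinarith [sq_nonneg q, hq0.le]
  · have hqne : q ≠ 0 := ne_of_gt hq0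
    have hx : 0 < p / q := div_pos hp0 hq0
    have key := aux_key_ineq hx
    have hq2 : (0:ℝ) < q^2 := by positivity
    have e' : (3 * (p/q - 1)^2) * q^2 = 3*(p-q)^2 := by field_simp; try ring_nf; try tauto
    have e : (2 * (p/q + 2) * (p/q * Real.log (p/q) - p/q + 1)) * q^2
        = 2*(p+2*q)*(p*Real.log (p/q) - p + q) := by
      field_simp
    have hmul := mul_le_mul_of_nonneg_right key hq2.le
    rw [e, e'] at hmul
    linarith

lemma aux_k_nonneg {p q : ℝ} (hp : 0 ≤ p) (hq : 0 ≤ q) (habs : q = 0 → p = 0) :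
    0 ≤ p * Real.log (p/q) - p + q := by
  have h := aux_pointwise hp hq habs
  rcases eq_or_lt_of_le (by positivity : (0:ℝ) ≤ p + 2*q) with h0 | h0
  · have hq0 : q = 0 := by linarith
    have hp0 : p = 0 := habs hq0
    simp [hp0, hq0]
  · nlinarith [sq_nonneg (p - q)]

section Helpers

variable {S A : Type*} [Fintype S] [DecidableEq S] [Fintype A]
variable {P : S → A → S → ℝ} {pol : S → A → ℝ}

lemma transMat_pow_nonneg (hP0 : ∀ s a s', 0 ≤ P s a s') (h0 : ∀ s a, 0 ≤ pol s a)
    (t : ℕ) (s s' : S) : 0 ≤ (transMat P pol ^ t) s s' := by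
  induction t generalizing s s' with
  | zero => simp [Matrix.one_apply]; positivity
  | succ t ih =>
    rw [pow_succ, Matrix.mul_apply]
    apply Finset.sum_nonneg
    intro k _
    exact mul_nonneg (ih s k) (Finset.sum_nonneg fun a _ =>
      mul_nonneg (h0 k a) (hP0 k a s'))

lemma transMat_pow_rowsum (hP1 : ∀ s a, ∑ s', P s a s' = 1) (h1 : ∀ s, ∑ a, pol s a = 1)
    (t : ℕ) (s : S) : ∑ s', (transMat P pol ^ t) s s' = 1 := by
  induction t generalizing s with
  | zero => simp [Matrix.one_apply]
  | succ t ih =>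
    simp only [pow_succ, Matrix.mul_apply]
    rw [Finset.sum_comm]
    have : ∀ k, ∑ s', (transMat P pol ^ t) s k * transMat P pol k s'
        = (transMat P pol ^ t) s k := by
      intro k
      rw [← Finset.mul_sum]
      have : ∑ s', transMat P pol k s' = 1 := by
        unfold transMat
        rw [Finset.sum_comm]
        simp_rw [← Finset.mul_sum]
        simp_rw [hP1]
        simpa using h1 k
      rw [this, mul_one]
    simp_rw [this]
    exact ih s

lemma transMat_pow_le_one (hP0 : ∀ s a s', 0 ≤ P s a s') (hP1 : ∀ s a, ∑ s', P s a s' = 1)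
    (h0 : ∀ s a, 0 ≤ pol s a) (h1 : ∀ s, ∑ a, pol s a = 1)
    (t : ℕ) (s s' : S) : (transMat P pol ^ t) s s' ≤ 1 := by
  have := transMat_pow_rowsum hP1 h1 t s
  calc (transMat P pol ^ t) s s' ≤ ∑ s'', (transMat P pol ^ t) s s'' :=
        Finset.single_le_sum (fun k _ => transMat_pow_nonneg hP0 h0 t s k) (Finset.mem_univ s')
    _ = 1 := this

lemma summable_geom_bdd {γ : ℝ} (hγ0 : 0 ≤ γ) (hγ1 : γ < 1) (f : ℕ → ℝ) (C : ℝ)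
    (hf : ∀ t, |f t| ≤ C) : Summable fun t => γ ^ t * f t := by
  apply Summable.of_norm_bounded
    ((summable_geometric_of_lt_one hγ0 hγ1).mul_left C)
  intro t
  rw [Real.norm_eq_abs, abs_mul, abs_pow, abs_of_nonneg hγ0, mul_comm]
  exact mul_le_mul_of_nonneg_right (hf t) (pow_nonneg hγ0 t)

lemma abs_sum_mul_le {ι : Type*} [Fintype ι] (c x : ι → ℝ) (hx : ∀ i, |x i| ≤ 1) :
    |∑ i, c i * x i| ≤ ∑ i, |c i| := by
  refine (Finset.abs_sum_le_sum_abs _ _).trans (Finset.sum_le_sum fun i _ => ?_)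
  rw [abs_mul]
  exact mul_le_of_le_one_right (abs_nonneg _) (hx i)

lemma abs_sum_mul_le' {ι : Type*} [Fintype ι] (c x : ι → ℝ) (hx : ∀ i, |x i| ≤ 1) :
    |∑ i, x i * c i| ≤ ∑ i, |c i| := by
  simp_rw [mul_comm (x _)]
  exact abs_sum_mul_le c x hx

end Helpers


section Core

variable {S A : Type*} [Fintype S] [DecidableEq S] [Fintype A]
variable {P : S → A → S → ℝ} {γ : ℝ} {ρ0 : S → ℝ}

/-- Bellman equation for `Vfun`. -/
lemma Vfun_bellman (hP0 : ∀ s a s', 0 ≤ P s a s') (hP1 : ∀ s a, ∑ s', P s a s' = 1)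
    (hγ0 : 0 < γ) (hγ1 : γ < 1) {pol : S → A → ℝ}
    (h0 : ∀ s a, 0 ≤ pol s a) (h1 : ∀ s, ∑ a, pol s a = 1) (F : S → A → ℝ) (s : S) :
    Vfun P γ F pol s = (∑ a, pol s a * F s a)
      + γ * ∑ s', transMat P pol s s' * Vfun P γ F pol s' := by
  set M := transMat P pol with hM
  set r : S → ℝ := fun s' => ∑ a, pol s' a * F s' a with hr
  have h01 : ∀ t (s s' : S), |(M ^ t) s s'| ≤ 1 := fun t s s' => by
    rw [abs_of_nonneg (transMat_pow_nonneg hP0 h0 t s s')]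
    exact transMat_pow_le_one hP0 hP1 h0 h1 t s s'
  have hbd : ∀ (s : S) (t : ℕ), |∑ s', (M ^ t) s s' * r s'| ≤ ∑ s', |r s'| :=
    fun s t => abs_sum_mul_le' r (fun s' => (M ^ t) s s') (fun s' => h01 t s s')
  have hsum : ∀ s : S, Summable (fun t : ℕ => γ ^ t * ∑ s', (M ^ t) s s' * r s') :=
    fun s => summable_geom_bdd hγ0.le hγ1 _ _ (hbd s)
  have key : Vfun P γ F pol s
      = γ ^ 0 * (∑ s', (M ^ 0) s s' * r s')
        + ∑' t : ℕ, γ ^ (t + 1) * ∑ s', (M ^ (t + 1)) s s' * r s' := by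
    rw [Vfun]
    exact (hsum s).tsum_eq_zero_add
  have step : ∀ t : ℕ, γ ^ (t + 1) * ∑ s', (M ^ (t + 1)) s s' * r s'
      = ∑ k, M s k * (γ * (γ ^ t * ∑ s', (M ^ t) k s' * r s')) := by
    intro t
    have h : ∀ s', (M ^ (t+1)) s s' = ∑ k, M s k * (M ^ t) k s' := by
      intro s'
      rw [pow_succ', Matrix.mul_apply]
    simp_rw [h, Finset.sum_mul, Finset.mul_sum]
    rw [Finset.sum_comm]
    refine Finset.sum_congr rfl fun k _ => Finset.sum_congr rfl fun s' _ => by ring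
  rw [key]
  simp_rw [step]
  rw [Summable.tsum_finsetSum (fun k _ => (((hsum k).mul_left γ).mul_left (M s k)))]
  have : ∀ k, ∑' t : ℕ, M s k * (γ * (γ ^ t * ∑ s', (M ^ t) k s' * r s'))
      = M s k * (γ * Vfun P γ F pol k) := by
    intro k
    rw [tsum_mul_left, tsum_mul_left]
    rfl
  simp_rw [this]
  have h00 : γ ^ 0 * (∑ s', (M ^ 0) s s' * r s') = r s := by
    simp [Matrix.one_apply]
  rw [h00, Finset.mul_sum]
  exact congrArg (r s + ·) (Finset.sum_congr rfl fun k _ => by ring)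

/-- `dVisit` is nonnegative. -/
lemma dVisit_nonneg (hP0 : ∀ s a s', 0 ≤ P s a s') (hγ0 : 0 < γ) (hγ1 : γ < 1)
    (hρ0 : ∀ s, 0 ≤ ρ0 s) {pol : S → A → ℝ} (h0 : ∀ s a, 0 ≤ pol s a) (s : S) :
    0 ≤ dVisit P γ ρ0 pol s := by
  apply mul_nonneg (by linarith)
  apply tsum_nonneg
  intro t
  apply mul_nonneg (pow_nonneg hγ0.le t)
  exact Finset.sum_nonneg fun s0 _ =>
    mul_nonneg (hρ0 s0) (transMat_pow_nonneg hP0 h0 t s0 s)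

/-- Dot product of `dVisit` with any function. -/
lemma dVisit_dot (hP0 : ∀ s a s', 0 ≤ P s a s') (hP1 : ∀ s a, ∑ s', P s a s' = 1)
    (hγ0 : 0 < γ) (hγ1 : γ < 1) {pol : S → A → ℝ}
    (h0 : ∀ s a, 0 ≤ pol s a) (h1 : ∀ s, ∑ a, pol s a = 1) (r : S → ℝ) :
    ∑ s, dVisit P γ ρ0 pol s * r s
      = (1 - γ) * ∑ s, ρ0 s * ∑' t : ℕ, γ ^ t * ∑ s', (transMat P pol ^ t) s s' * r s' := by
  set M := transMat P pol with hM
  have h01 : ∀ t (s s' : S), |(M ^ t) s s'| ≤ 1 := fun t s s' => by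
    rw [abs_of_nonneg (transMat_pow_nonneg hP0 h0 t s s')]
    exact transMat_pow_le_one hP0 hP1 h0 h1 t s s'
  have hrow : ∀ (s : S) (t : ℕ), |∑ s', (M ^ t) s s' * r s'| ≤ ∑ s', |r s'| :=
    fun s t => abs_sum_mul_le' r (fun s' => (M ^ t) s s') (fun s' => h01 t s s')
  have hc : ∀ (t : ℕ) (s : S), |∑ s0, ρ0 s0 * (M ^ t) s0 s| ≤ ∑ s0, |ρ0 s0| :=
    fun t s => abs_sum_mul_le ρ0 (fun s0 => (M ^ t) s0 s) (fun s0 => h01 t s0 s)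
  have hSa : ∀ s : S, Summable fun t : ℕ => γ ^ t * ((∑ s0, ρ0 s0 * (M ^ t) s0 s) * r s) := by
    intro s
    apply summable_geom_bdd hγ0.le hγ1 _ ((∑ s0, |ρ0 s0|) * |r s|)
    intro t
    rw [abs_mul]
    exact mul_le_mul_of_nonneg_right (hc t s) (abs_nonneg _)
  have hSb : ∀ s : S, Summable fun t : ℕ => ρ0 s * (γ ^ t * ∑ s', (M ^ t) s s' * r s') :=
    fun s => (summable_geom_bdd hγ0.le hγ1 _ _ (hrow s)).mul_left (ρ0 s)
  have e1 : ∀ s, dVisit P γ ρ0 pol s * r s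
      = (1 - γ) * ∑' t : ℕ, γ ^ t * ((∑ s0, ρ0 s0 * (M ^ t) s0 s) * r s) := by
    intro s
    rw [dVisit, mul_assoc, ← tsum_mul_right]
    exact congrArg _ (tsum_congr fun t2 => by ring)
  simp_rw [e1]
  rw [← Finset.mul_sum]
  congr 1
  rw [← Summable.tsum_finsetSum (fun s _ => hSa s)]
  simp_rw [← tsum_mul_left]
  rw [← Summable.tsum_finsetSum (fun s _ => hSb s)]
  apply tsum_congr
  intro t
  simp_rw [Finset.sum_mul, Finset.mul_sum]
  rw [Finset.sum_comm]
  exact Finset.sum_congr rfl fun k _ => Finset.sum_congr rfl fun s' _ => by ring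

/-- `dVisit` sums to one. -/
lemma dVisit_sum_one (hP0 : ∀ s a s', 0 ≤ P s a s') (hP1 : ∀ s a, ∑ s', P s a s' = 1)
    (hγ0 : 0 < γ) (hγ1 : γ < 1) (hρ1 : ∑ s, ρ0 s = 1) {pol : S → A → ℝ}
    (h0 : ∀ s a, 0 ≤ pol s a) (h1 : ∀ s, ∑ a, pol s a = 1) :
    ∑ s, dVisit P γ ρ0 pol s = 1 := by
  have := dVisit_dot (ρ0 := ρ0) hP0 hP1 hγ0 hγ1 h0 h1 (fun _ => 1)
  simp only [mul_one] at this
  rw [this]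
  have hrow : ∀ (s : S) (t : ℕ), ∑ s', (transMat P pol ^ t) s s' = 1 :=
    fun s t => transMat_pow_rowsum hP1 h1 t s
  have : ∀ s : S, (∑' t : ℕ, γ ^ t * ∑ s', (transMat P pol ^ t) s s') = (1 - γ)⁻¹ := by
    intro s
    simp_rw [hrow s, mul_one]
    exact tsum_geometric_of_lt_one hγ0.le hγ1
  simp_rw [this]
  rw [← Finset.sum_mul, hρ1, one_mul, mul_inv_cancel₀ (by linarith : (1:ℝ) - γ ≠ 0)]

/-- Recursion for `dVisit`. -/
lemma dVisit_rec (hP0 : ∀ s a s', 0 ≤ P s a s') (hP1 : ∀ s a, ∑ s', P s a s' = 1)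
    (hγ0 : 0 < γ) (hγ1 : γ < 1) {pol : S → A → ℝ}
    (h0 : ∀ s a, 0 ≤ pol s a) (h1 : ∀ s, ∑ a, pol s a = 1) (s : S) :
    dVisit P γ ρ0 pol s
      = (1 - γ) * ρ0 s + γ * ∑ k, dVisit P γ ρ0 pol k * transMat P pol k s := by
  set M := transMat P pol with hM
  have h01 : ∀ t (s s' : S), |(M ^ t) s s'| ≤ 1 := fun t s s' => by
    rw [abs_of_nonneg (transMat_pow_nonneg hP0 h0 t s s')]
    exact transMat_pow_le_one hP0 hP1 h0 h1 t s s'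
  have hc : ∀ (t : ℕ) (s : S), |∑ s0, ρ0 s0 * (M ^ t) s0 s| ≤ ∑ s0, |ρ0 s0| :=
    fun t s => abs_sum_mul_le ρ0 (fun s0 => (M ^ t) s0 s) (fun s0 => h01 t s0 s)
  have hsum : ∀ s : S, Summable fun t : ℕ => γ ^ t * ∑ s0, ρ0 s0 * (M ^ t) s0 s :=
    fun s => summable_geom_bdd hγ0.le hγ1 _ _ (fun t => hc t s)
  have key : (∑' t : ℕ, γ ^ t * ∑ s0, ρ0 s0 * (M ^ t) s0 s)
      = γ ^ 0 * (∑ s0, ρ0 s0 * (M ^ 0) s0 s)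
        + ∑' t : ℕ, γ ^ (t + 1) * ∑ s0, ρ0 s0 * (M ^ (t + 1)) s0 s :=
    (hsum s).tsum_eq_zero_add
  have hc0 : ∑ s0, ρ0 s0 * (M ^ 0) s0 s = ρ0 s := by
    simp [Matrix.one_apply]
  have step : ∀ t : ℕ, γ ^ (t + 1) * ∑ s0, ρ0 s0 * (M ^ (t + 1)) s0 s
      = ∑ k, (γ ^ t * ∑ s0, ρ0 s0 * (M ^ t) s0 k) * (γ * M k s) := by
    intro t
    have h : ∀ s0, (M ^ (t + 1)) s0 s = ∑ k, (M ^ t) s0 k * M k s := by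
      intro s0
      rw [pow_succ, Matrix.mul_apply]
    simp_rw [h, Finset.mul_sum, Finset.sum_mul]
    rw [Finset.sum_comm]
    exact Finset.sum_congr rfl fun k _ => Finset.sum_congr rfl fun s0 _ => by ring
  have swap : (∑' t : ℕ, γ ^ (t + 1) * ∑ s0, ρ0 s0 * (M ^ (t + 1)) s0 s)
      = ∑ k, (∑' t : ℕ, γ ^ t * ∑ s0, ρ0 s0 * (M ^ t) s0 k) * (γ * M k s) := by
    simp_rw [step]
    rw [Summable.tsum_finsetSum (fun k _ => (hsum k).mul_right _)]
    exact Finset.sum_congr rfl fun k _ => tsum_mul_right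
  rw [dVisit, key, swap, hc0, mul_add, Finset.mul_sum]
  rw [pow_zero, one_mul]
  congr 1
  rw [Finset.mul_sum]
  apply Finset.sum_congr rfl
  intro k _
  rw [dVisit]
  ring


/-- Performance difference lemma. -/
lemma pdl (hP0 : ∀ s a s', 0 ≤ P s a s') (hP1 : ∀ s a, ∑ s', P s a s' = 1)
    (hγ0 : 0 < γ) (hγ1 : γ < 1) {pol pol' : S → A → ℝ}
    (h0 : ∀ s a, 0 ≤ pol s a) (h1 : ∀ s, ∑ a, pol s a = 1)
    (h0' : ∀ s a, 0 ≤ pol' s a) (h1' : ∀ s, ∑ a, pol' s a = 1) (C : S → A → ℝ) :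
    ∑ s, dVisit P γ ρ0 pol' s * ∑ a, pol' s a * Adv P γ C pol s a
      = (1 - γ) * (Jret P γ ρ0 C pol' - Jret P γ ρ0 C pol) := by
  set V : S → ℝ := Vfun P γ C pol with hV
  set d' : S → ℝ := dVisit P γ ρ0 pol' with hd'
  have mid : ∀ s, ∑ a, pol' s a * ∑ s', P s a s' * V s'
      = ∑ s', transMat P pol' s s' * V s' := by
    intro s
    simp_rw [Finset.mul_sum]
    rw [Finset.sum_comm]
    unfold transMat
    simp_rw [Finset.sum_mul]
    exact Finset.sum_congr rfl fun s' _ => Finset.sum_congr rfl fun a _ => by ring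
  have hg : ∀ s, (∑ a, pol' s a * Adv P γ C pol s a)
      = (∑ a, pol' s a * C s a) + γ * (∑ s', transMat P pol' s s' * V s') - V s := by
    intro s
    unfold Adv Qfun
    have e : ∀ a, pol' s a * (C s a + γ * ∑ s', P s a s' * V s' - V s)
        = pol' s a * C s a + γ * (pol' s a * ∑ s', P s a s' * V s') - pol' s a * V s := by
      intro a; ring
    calc ∑ a, pol' s a * (C s a + γ * ∑ s', P s a s' * V s' - Vfun P γ C pol s)
        = ∑ a, (pol' s a * C s a + γ * (pol' s a * ∑ s', P s a s' * V s')
            - pol' s a * V s) := Finset.sum_congr rfl fun a _ => e a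
      _ = (∑ a, pol' s a * C s a) + γ * (∑ a, pol' s a * ∑ s', P s a s' * V s')
            - (∑ a, pol' s a) * V s := by
          rw [Finset.sum_sub_distrib, Finset.sum_add_distrib, ← Finset.mul_sum,
            ← Finset.sum_mul]
      _ = (∑ a, pol' s a * C s a) + γ * (∑ s', transMat P pol' s s' * V s') - V s := by
          rw [mid s, h1' s, one_mul]
  simp_rw [hg, mul_sub, mul_add, Finset.sum_sub_distrib, Finset.sum_add_distrib]
  have T1 : ∑ s, d' s * (∑ a, pol' s a * C s a) = (1 - γ) * Jret P γ ρ0 C pol' := by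
    rw [hd', dVisit_dot hP0 hP1 hγ0 hγ1 h0' h1' (fun s => ∑ a, pol' s a * C s a)]
    rfl
  have hrec : ∀ s' : S, γ * ∑ k, d' k * transMat P pol' k s' = d' s' - (1 - γ) * ρ0 s' := by
    intro s'
    have := dVisit_rec (ρ0 := ρ0) hP0 hP1 hγ0 hγ1 h0' h1' s'
    rw [← hd'] at this
    linarith
  have T2 : ∑ s, d' s * (γ * ∑ s', transMat P pol' s s' * V s')
      = ∑ s', d' s' * V s' - (1 - γ) * ∑ s', ρ0 s' * V s' := by
    have e : ∀ s, d' s * (γ * ∑ s', transMat P pol' s s' * V s')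
        = ∑ s', γ * (d' s * transMat P pol' s s') * V s' := by
      intro s
      rw [Finset.mul_sum, Finset.mul_sum]
      exact Finset.sum_congr rfl fun s' _ => by ring
    simp_rw [e]
    rw [Finset.sum_comm]
    have e2 : ∀ s', ∑ s, γ * (d' s * transMat P pol' s s') * V s'
        = (γ * ∑ k, d' k * transMat P pol' k s') * V s' := by
      intro s'
      rw [Finset.mul_sum, Finset.sum_mul]
      try exact Finset.sum_congr rfl fun k _ => by ring
    simp_rw [e2, hrec]
    rw [Finset.mul_sum, ← Finset.sum_sub_distrib]
    exact Finset.sum_congr rfl fun s' _ => by ring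
  rw [T1, T2]
  have hJ : Jret P γ ρ0 C pol = ∑ s, ρ0 s * V s := rfl
  rw [hJ]
  ring

/-- Shift bound on visitation distributions. -/
lemma dshift (hP0 : ∀ s a s', 0 ≤ P s a s') (hP1 : ∀ s a, ∑ s', P s a s' = 1)
    (hγ0 : 0 < γ) (hγ1 : γ < 1) (hρ0 : ∀ s, 0 ≤ ρ0 s) {pol pol' : S → A → ℝ}
    (h0 : ∀ s a, 0 ≤ pol s a) (h1 : ∀ s, ∑ a, pol s a = 1)
    (h0' : ∀ s a, 0 ≤ pol' s a) (h1' : ∀ s, ∑ a, pol' s a = 1) :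
    ∑ s, |dVisit P γ ρ0 pol' s - dVisit P γ ρ0 pol s|
      ≤ γ / (1 - γ) * ∑ s, dVisit P γ ρ0 pol s * ∑ a, |pol' s a - pol s a| := by
  set d : S → ℝ := dVisit P γ ρ0 pol with hd
  set d' : S → ℝ := dVisit P γ ρ0 pol' with hd''
  set M : Matrix S S ℝ := transMat P pol with hM
  set M' : Matrix S S ℝ := transMat P pol' with hM'
  have hd0 : ∀ s, 0 ≤ d s := fun s => dVisit_nonneg hP0 hγ0 hγ1 hρ0 h0 s
  have hM'0 : ∀ k s, 0 ≤ M' k s := fun k s => by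
    have := transMat_pow_nonneg (pol := pol') hP0 h0' 1 k s
    rwa [pow_one] at this
  have hM'row : ∀ k, ∑ s, M' k s = 1 := fun k => by
    have := transMat_pow_rowsum (pol := pol') hP1 h1' 1 k
    rwa [pow_one] at this
  have hrec : ∀ s, d' s - d s
      = γ * (∑ k, (d' k - d k) * M' k s + ∑ k, d k * (M' k s - M k s)) := by
    intro s
    have e1 := dVisit_rec (ρ0 := ρ0) hP0 hP1 hγ0 hγ1 h0 h1 s
    have e2 := dVisit_rec (ρ0 := ρ0) hP0 hP1 hγ0 hγ1 h0' h1' s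
    rw [← hd, ← hM] at e1
    rw [← hd'', ← hM'] at e2
    have e3 : ∑ k, (d' k - d k) * M' k s + ∑ k, d k * (M' k s - M k s)
        = ∑ k, d' k * M' k s - ∑ k, d k * M k s := by
      rw [← Finset.sum_add_distrib, ← Finset.sum_sub_distrib]
      exact Finset.sum_congr rfl fun k _ => by ring
    rw [e3]
    rw [e1, e2]
    ring
  have hTV : ∀ k, ∑ s, |M' k s - M k s| ≤ ∑ a, |pol' k a - pol k a| := by
    intro k
    have e : ∀ s : S, M' k s - M k s = ∑ a, (pol' k a - pol k a) * P k a s := by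
      intro s
      rw [hM', hM]
      unfold transMat
      rw [← Finset.sum_sub_distrib]
      exact Finset.sum_congr rfl fun a _ => by ring
    calc ∑ s, |M' k s - M k s| = ∑ s, |∑ a, (pol' k a - pol k a) * P k a s| := by
          exact Finset.sum_congr rfl fun s _ => by rw [e s]
      _ ≤ ∑ s, ∑ a, |pol' k a - pol k a| * P k a s := by
          refine Finset.sum_le_sum fun s _ => ?_
          refine (Finset.abs_sum_le_sum_abs _ _).trans (Finset.sum_le_sum fun a _ => ?_)
          rw [abs_mul, abs_of_nonneg (hP0 k a s)]
      _ = ∑ a, |pol' k a - pol k a| * ∑ s, P k a s := by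
          rw [Finset.sum_comm]
          exact Finset.sum_congr rfl fun a _ => by rw [Finset.mul_sum]
      _ = ∑ a, |pol' k a - pol k a| := by
          exact Finset.sum_congr rfl fun a _ => by rw [hP1 k a, mul_one]
  set X : ℝ := ∑ s, |d' s - d s| with hX
  set B : ℝ := ∑ s, d s * ∑ a, |pol' s a - pol s a| with hB
  have hbound : X ≤ γ * (X + B) := by
    have c1 : X ≤ ∑ s, γ * (∑ k, |d' k - d k| * M' k s + ∑ k, d k * |M' k s - M k s|) := by
      refine Finset.sum_le_sum fun s _ => ?_
      rw [hrec s, abs_mul, abs_of_nonneg hγ0.le]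
      refine mul_le_mul_of_nonneg_left ?_ hγ0.le
      refine (abs_add_le _ _).trans (add_le_add ?_ ?_)
      · refine (Finset.abs_sum_le_sum_abs _ _).trans
          (le_of_eq (Finset.sum_congr rfl fun k _ => ?_))
        rw [abs_mul, abs_of_nonneg (hM'0 k s)]
      · refine (Finset.abs_sum_le_sum_abs _ _).trans
          (le_of_eq (Finset.sum_congr rfl fun k _ => ?_))
        rw [abs_mul, abs_of_nonneg (hd0 k)]
    have c2 : ∑ s, γ * (∑ k, |d' k - d k| * M' k s + ∑ k, d k * |M' k s - M k s|)
        = γ * (∑ k, |d' k - d k| * ∑ s, M' k s + ∑ k, d k * ∑ s, |M' k s - M k s|) := by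
      rw [← Finset.mul_sum]
      congr 1
      rw [Finset.sum_add_distrib]
      congr 1
      · rw [Finset.sum_comm]
        exact Finset.sum_congr rfl fun k _ => by rw [Finset.mul_sum]
      · rw [Finset.sum_comm]
        exact Finset.sum_congr rfl fun k _ => by rw [Finset.mul_sum]
    have c3 : ∑ k, |d' k - d k| * ∑ s, M' k s = X := by
      rw [hX]
      exact Finset.sum_congr rfl fun k _ => by rw [hM'row k, mul_one]
    have c4 : ∑ k, d k * ∑ s, |M' k s - M k s| ≤ B := by
      rw [hB]
      exact Finset.sum_le_sum fun k _ => mul_le_mul_of_nonneg_left (hTV k) (hd0 k)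
    calc X ≤ _ := c1
      _ = _ := c2
      _ ≤ γ * (X + B) := by
          refine mul_le_mul_of_nonneg_left ?_ hγ0.le
          rw [c3]
          exact add_le_add_right c4 X
  have h1γ : 0 < 1 - γ := by linarith
  rw [div_mul_eq_mul_div, le_div_iff₀ h1γ]
  nlinarith [hbound]

/-- TV–KL bound (Pinsker + Cauchy–Schwarz). -/
lemma tv_kl (hP0 : ∀ s a s', 0 ≤ P s a s') (hP1 : ∀ s a, ∑ s', P s a s' = 1)
    (hγ0 : 0 < γ) (hγ1 : γ < 1) (hρ0 : ∀ s, 0 ≤ ρ0 s) (hρ1 : ∑ s, ρ0 s = 1)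
    {pol pol' : S → A → ℝ} {δ : ℝ} (hδ : 0 ≤ δ)
    (h0 : ∀ s a, 0 ≤ pol s a) (h1 : ∀ s, ∑ a, pol s a = 1)
    (h0' : ∀ s a, 0 ≤ pol' s a) (h1' : ∀ s, ∑ a, pol' s a = 1)
    (habs : ∀ s a, pol s a = 0 → pol' s a = 0)
    (hKL : avgKL P γ ρ0 pol' pol ≤ δ) :
    ∑ s, dVisit P γ ρ0 pol s * ∑ a, |pol' s a - pol s a| ≤ Real.sqrt (2 * δ) := by
  set d : S → ℝ := dVisit P γ ρ0 pol with hd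
  have hd0 : ∀ s, 0 ≤ d s := fun s => dVisit_nonneg hP0 hγ0 hγ1 hρ0 h0 s
  have hdsum : ∑ s, d s = 1 := dVisit_sum_one hP0 hP1 hγ0 hγ1 hρ1 h0 h1
  set k : S → A → ℝ := fun s a =>
    pol' s a * Real.log (pol' s a / pol s a) - pol' s a + pol s a with hk
  have hknn : ∀ s a, 0 ≤ k s a :=
    fun s a => aux_k_nonneg (h0' s a) (h0 s a) (habs s a)
  have hpt : ∀ s a, (pol' s a - pol s a)^2 ≤ (2/3) * (pol' s a + 2 * pol s a) * k s a :=
    fun s a => aux_pointwise (h0' s a) (h0 s a) (habs s a)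
  set x : S × A → ℝ := fun p => Real.sqrt (d p.1 * (pol' p.1 p.2 + 2 * pol p.1 p.2) / 3) with hx
  set y : S × A → ℝ := fun p => Real.sqrt (2 * (d p.1 * k p.1 p.2)) with hy
  have hxy : ∀ p : S × A, d p.1 * |pol' p.1 p.2 - pol p.1 p.2| ≤ x p * y p := by
    intro p
    have hsq : (d p.1 * |pol' p.1 p.2 - pol p.1 p.2|)^2
        ≤ (d p.1 * (pol' p.1 p.2 + 2 * pol p.1 p.2) / 3) * (2 * (d p.1 * k p.1 p.2)) := by
      have h2 := mul_le_mul_of_nonneg_left (hpt p.1 p.2) (mul_self_nonneg (d p.1))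
      calc (d p.1 * |pol' p.1 p.2 - pol p.1 p.2|)^2
          = d p.1 * d p.1 * (pol' p.1 p.2 - pol p.1 p.2)^2 := by rw [mul_pow, sq_abs]; ring
        _ ≤ d p.1 * d p.1 * ((2/3) * (pol' p.1 p.2 + 2 * pol p.1 p.2) * k p.1 p.2) := h2
        _ = (d p.1 * (pol' p.1 p.2 + 2 * pol p.1 p.2) / 3) * (2 * (d p.1 * k p.1 p.2)) := by
            ring
    have hnn : 0 ≤ d p.1 * |pol' p.1 p.2 - pol p.1 p.2| :=
      mul_nonneg (hd0 p.1) (abs_nonneg _)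
    have e : x p * y p = Real.sqrt ((d p.1 * (pol' p.1 p.2 + 2 * pol p.1 p.2) / 3)
        * (2 * (d p.1 * k p.1 p.2))) := by
      rw [hx, hy]
      have hA : 0 ≤ d p.1 * (pol' p.1 p.2 + 2 * pol p.1 p.2) / 3 := by
        have := hd0 p.1
        have := h0' p.1 p.2
        have := h0 p.1 p.2
        positivity
      exact (Real.sqrt_mul hA _).symm
    rw [← Real.sqrt_sq hnn, e]
    exact Real.sqrt_le_sqrt hsq
  have hx2 : ∑ p : S × A, x p ^ 2 = 1 := by
    have e : ∀ p : S × A, x p ^ 2 = d p.1 * (pol' p.1 p.2 + 2 * pol p.1 p.2) / 3 := by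
      intro p
      rw [hx, Real.sq_sqrt]
      have := hd0 p.1
      have := h0' p.1 p.2
      have := h0 p.1 p.2
      positivity
    simp_rw [e]
    rw [Fintype.sum_prod_type]
    have e2 : ∀ s : S, ∑ a, d s * (pol' s a + 2 * pol s a) / 3 = d s := by
      intro s
      have : ∑ a, d s * (pol' s a + 2 * pol s a) / 3
          = d s / 3 * ∑ a, (pol' s a + 2 * pol s a) := by
        rw [Finset.mul_sum]
        exact Finset.sum_congr rfl fun a _ => by ring
      rw [this, Finset.sum_add_distrib, h1' s, ← Finset.mul_sum, h1 s]
      ring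
    simp_rw [e2]
    exact hdsum
  have hy2 : ∑ p : S × A, y p ^ 2 ≤ 2 * δ := by
    have e : ∀ p : S × A, y p ^ 2 = 2 * (d p.1 * k p.1 p.2) := by
      intro p
      rw [hy, Real.sq_sqrt]
      exact mul_nonneg two_pos.le (mul_nonneg (hd0 p.1) (hknn p.1 p.2))
    simp_rw [e]
    rw [Fintype.sum_prod_type]
    have e2 : ∀ s : S, ∑ a, 2 * (d s * k s a) = 2 * (d s * klState pol' pol s) := by
      intro s
      rw [← Finset.mul_sum, ← Finset.mul_sum]
      congr 1
      rw [hk]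
      simp only
      rw [Finset.sum_add_distrib, Finset.sum_sub_distrib, h1 s, h1' s, klState]
      ring
    simp_rw [e2]
    have : ∑ s, 2 * (d s * klState pol' pol s) = 2 * avgKL P γ ρ0 pol' pol := by
      rw [avgKL, Finset.mul_sum]
    rw [this]
    linarith
  have L : ∑ s, d s * ∑ a, |pol' s a - pol s a|
      = ∑ p : S × A, d p.1 * |pol' p.1 p.2 - pol p.1 p.2| := by
    rw [Fintype.sum_prod_type]
    exact Finset.sum_congr rfl fun s _ => by rw [Finset.mul_sum]
  rw [L]
  have step1 : ∑ p : S × A, d p.1 * |pol' p.1 p.2 - pol p.1 p.2| ≤ ∑ p : S × A, x p * y p :=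
    Finset.sum_le_sum fun p _ => hxy p
  have hxynn : (0:ℝ) ≤ ∑ p : S × A, x p * y p :=
    Finset.sum_nonneg fun p _ => mul_nonneg (Real.sqrt_nonneg _) (Real.sqrt_nonneg _)
  have cs := Finset.sum_mul_sq_le_sq_mul_sq Finset.univ x y
  have step2 : ∑ p : S × A, x p * y p ≤ Real.sqrt (2 * δ) := by
    rw [show (2:ℝ) * δ = 1 * (2 * δ) by ring]
    rw [← Real.sqrt_sq hxynn]
    apply Real.sqrt_le_sqrt
    calc (∑ p : S × A, x p * y p)^2 ≤ (∑ p : S × A, x p ^ 2) * ∑ p : S × A, y p ^ 2 := cs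
      _ ≤ 1 * (2 * δ) := by
          rw [hx2]
          exact mul_le_mul_of_nonneg_left hy2 one_pos.le
  linarith

/-- One-step TRPO-style surrogate bound. -/
lemma step_bound [Nonempty S] (hP0 : ∀ s a s', 0 ≤ P s a s') (hP1 : ∀ s a, ∑ s', P s a s' = 1)
    (hγ0 : 0 < γ) (hγ1 : γ < 1) (hρ0 : ∀ s, 0 ≤ ρ0 s) (hρ1 : ∑ s, ρ0 s = 1)
    {pol pol' : S → A → ℝ} {δ εC : ℝ} (hδ : 0 ≤ δ) (hε : 0 ≤ εC) (C : S → A → ℝ)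
    (h0 : ∀ s a, 0 ≤ pol s a) (h1 : ∀ s, ∑ a, pol s a = 1)
    (h0' : ∀ s a, 0 ≤ pol' s a) (h1' : ∀ s, ∑ a, pol' s a = 1)
    (habs : ∀ s a, pol s a = 0 → pol' s a = 0)
    (hKL : avgKL P γ ρ0 pol' pol ≤ δ)
    (heps : epsAdv P γ C pol pol' ≤ εC) :
    Jret P γ ρ0 C pol' ≤ Jret P γ ρ0 C pol + (1 / (1 - γ)) * surrAdv P γ ρ0 C pol pol'
      + Real.sqrt (2 * δ) * γ / (1 - γ) ^ 2 * εC := by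
  have h1γ : 0 < 1 - γ := by linarith
  set g : S → ℝ := fun s => ∑ a, pol' s a * Adv P γ C pol s a with hg
  set d : S → ℝ := dVisit P γ ρ0 pol with hd
  set d' : S → ℝ := dVisit P γ ρ0 pol' with hd'
  have hpdl : ∑ s, d' s * g s
      = (1 - γ) * (Jret P γ ρ0 C pol' - Jret P γ ρ0 C pol) :=
    pdl hP0 hP1 hγ0 hγ1 h0 h1 h0' h1' C
  have hsurr : surrAdv P γ ρ0 C pol pol' = ∑ s, d s * g s := rfl
  have hgb : ∀ s, |g s| ≤ εC := by
    intro s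
    refine le_trans ?_ heps
    exact Finset.le_sup' (fun s => |∑ a, pol' s a * Adv P γ C pol s a|) (Finset.mem_univ s)
  have hdiff : ∑ s, d' s * g s - ∑ s, d s * g s
      ≤ γ / (1 - γ) * Real.sqrt (2 * δ) * εC := by
    have e0 : ∑ s, d' s * g s - ∑ s, d s * g s = ∑ s, (d' s - d s) * g s := by
      rw [← Finset.sum_sub_distrib]
      exact Finset.sum_congr rfl fun s _ => by ring
    have e1 : ∑ s, (d' s - d s) * g s ≤ (∑ s, |d' s - d s|) * εC := by
      rw [Finset.sum_mul]
      refine Finset.sum_le_sum fun s _ => ?_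
      calc (d' s - d s) * g s ≤ |(d' s - d s) * g s| := le_abs_self _
        _ = |d' s - d s| * |g s| := abs_mul _ _
        _ ≤ |d' s - d s| * εC := mul_le_mul_of_nonneg_left (hgb s) (abs_nonneg _)
    have e2 : ∑ s, |d' s - d s|
        ≤ γ / (1 - γ) * ∑ s, d s * ∑ a, |pol' s a - pol s a| :=
      dshift hP0 hP1 hγ0 hγ1 hρ0 h0 h1 h0' h1'
    have e3 : ∑ s, d s * ∑ a, |pol' s a - pol s a| ≤ Real.sqrt (2 * δ) :=
      tv_kl hP0 hP1 hγ0 hγ1 hρ0 hρ1 hδ h0 h1 h0' h1' habs hKL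
    have e4 : ∑ s, |d' s - d s| ≤ γ / (1 - γ) * Real.sqrt (2 * δ) := by
      refine e2.trans ?_
      exact mul_le_mul_of_nonneg_left e3 (by positivity)
    calc ∑ s, d' s * g s - ∑ s, d s * g s = ∑ s, (d' s - d s) * g s := e0
      _ ≤ (∑ s, |d' s - d s|) * εC := e1
      _ ≤ γ / (1 - γ) * Real.sqrt (2 * δ) * εC := mul_le_mul_of_nonneg_right e4 hε
  have key : (1 - γ) * (Jret P γ ρ0 C pol' - Jret P γ ρ0 C pol)
      ≤ surrAdv P γ ρ0 C pol pol' + γ / (1 - γ) * Real.sqrt (2 * δ) * εC := by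
    rw [hsurr]
    linarith [hpdl, hdiff]
  have hdiv : Jret P γ ρ0 C pol' - Jret P γ ρ0 C pol
      ≤ (surrAdv P γ ρ0 C pol pol' + γ / (1 - γ) * Real.sqrt (2 * δ) * εC) / (1 - γ) := by
    rw [le_div_iff₀ h1γ]
    linarith [key]
  have efin : (surrAdv P γ ρ0 C pol pol' + γ / (1 - γ) * Real.sqrt (2 * δ) * εC) / (1 - γ)
      = (1 / (1 - γ)) * surrAdv P γ ρ0 C pol pol'
        + Real.sqrt (2 * δ) * γ / (1 - γ) ^ 2 * εC := by
    field_simp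
  linarith [hdiv, efin.symm.le, efin.le]

end Core

/-- adversarial interior-point cost-budget bound
(Proposition 5.2, cost part). -/
theorem adversarial_interior_point_cost_bound {S A : Type*} [Fintype S] [DecidableEq S] [Fintype A] [Nonempty S] [Nonempty A]
    (P : S → A → S → ℝ) (hP0 : ∀ s a s', 0 ≤ P s a s') (hP1 : ∀ s a, ∑ s', P s a s' = 1)
    (γ : ℝ) (hγ0 : 0 < γ) (hγ1 : γ < 1)
    (ρ0 : S → ℝ) (hρ0 : ∀ s, 0 ≤ ρ0 s) (hρ1 : ∑ s, ρ0 s = 1)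
    (δ : ℝ) (hδ : 0 < δ) (t : ℝ) (ht : 0 < t) (εC : ℝ) (hεC : 0 ≤ εC) (d : ℝ)
    (C : S → A → ℝ) (n1 n2 : ℕ) (hn1 : 1 ≤ n1) (σ pol : ℕ → S → A → ℝ)
    (hσ0 : ∀ i ≤ n1, ∀ s a, 0 ≤ σ i s a)
    (hσ1 : ∀ i ≤ n1, ∀ s, ∑ a, σ i s a = 1)
    (hσabs : ∀ i < n1, ∀ s a, σ i s a = 0 → σ (i + 1) s a = 0)
    (hσKL : ∀ i < n1, avgKL P γ ρ0 (σ (i + 1)) (σ i) ≤ δ)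
    (hσsurr : ∀ i < n1,
      Jret P γ ρ0 C (σ i) + (1 / (1 - γ)) * surrAdv P γ ρ0 C (σ i) (σ (i + 1)) ≤ d)
    (hσeps : ∀ i < n1, epsAdv P γ C (σ i) (σ (i + 1)) ≤ εC)
    (hlink : pol 0 = σ n1)
    (hpol0 : ∀ i ≤ n2, ∀ s a, 0 ≤ pol i s a)
    (hpol1 : ∀ i ≤ n2, ∀ s, ∑ a, pol i s a = 1)
    (hpabs : ∀ i < n2, ∀ s a, pol i s a = 0 → pol (i + 1) s a = 0)
    (hpKL : ∀ i < n2, avgKL P γ ρ0 (pol (i + 1)) (pol i) ≤ δ)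
    (hpA : ∀ i < n2, surrAdv P γ ρ0 C (pol i) (pol (i + 1)) ≤ 1 / t)
    (hpeps : ∀ i < n2, epsAdv P γ C (pol i) (pol (i + 1)) ≤ εC) :
    Jret P γ ρ0 C (pol n2) - d ≤
      (n2 : ℝ) / ((1 - γ) * t)
        + (Real.sqrt (2 * δ) * γ / (1 - γ) ^ 2) * ((n1 : ℝ) + (n2 : ℝ)) * εC := by
  have h1γ : 0 < 1 - γ := by linarith
  set K : ℝ := Real.sqrt (2 * δ) * γ / (1 - γ) ^ 2 * εC with hK
  have hKnn : 0 ≤ K := by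
    apply mul_nonneg _ hεC
    apply div_nonneg (mul_nonneg (Real.sqrt_nonneg _) hγ0.le) (sq_nonneg _)
  -- last max-reward step
  have hi0 : n1 - 1 < n1 := Nat.sub_lt (lt_of_lt_of_le one_pos hn1) one_pos
  have hsucc : n1 - 1 + 1 = n1 := Nat.succ_pred_eq_of_pos (lt_of_lt_of_le one_pos hn1)
  have hs1 : Jret P γ ρ0 C (σ n1) ≤ d + K := by
    have hstep := step_bound hP0 hP1 hγ0 hγ1 hρ0 hρ1 hδ.le hεC C
      (hσ0 (n1 - 1) (le_of_lt hi0)) (hσ1 (n1 - 1) (le_of_lt hi0))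
      (by rw [hsucc]; exact hσ0 n1 le_rfl) (by rw [hsucc]; exact hσ1 n1 le_rfl)
      (hσabs (n1 - 1) hi0) (hσKL (n1 - 1) hi0) (hσeps (n1 - 1) hi0)
    rw [hsucc] at hstep
    have := hσsurr (n1 - 1) hi0
    rw [show n1 - 1 + 1 = n1 from hsucc] at this
    linarith [hstep, this]
  -- min-cost chain
  have hind : ∀ i, i ≤ n2 →
      Jret P γ ρ0 C (pol i) ≤ d + K + (i : ℝ) * (1 / ((1 - γ) * t) + K) := by
    intro i
    induction i with
    | zero =>
      intro _
      rw [hlink]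
      simpa using (by linarith [hs1] :
        Jret P γ ρ0 C (σ n1) ≤ d + K + (0 : ℝ) * (1 / ((1 - γ) * t) + K))
    | succ i ih =>
      intro hle
      have hi : i < n2 := lt_of_lt_of_le (Nat.lt_succ_self i) hle
      have ihi := ih (le_of_lt hi)
      have hstep := step_bound hP0 hP1 hγ0 hγ1 hρ0 hρ1 hδ.le hεC C
        (hpol0 i (le_of_lt hi)) (hpol1 i (le_of_lt hi))
        (hpol0 (i + 1) hi) (hpol1 (i + 1) hi)
        (hpabs i hi) (hpKL i hi) (hpeps i hi)
      have hsurr := hpA i hi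
      have hmul : (1 / (1 - γ)) * surrAdv P γ ρ0 C (pol i) (pol (i + 1))
          ≤ 1 / ((1 - γ) * t) := by
        have h2 : (1 / (1 - γ)) * surrAdv P γ ρ0 C (pol i) (pol (i + 1))
            ≤ (1 / (1 - γ)) * (1 / t) :=
          mul_le_mul_of_nonneg_left hsurr (by positivity)
        rwa [one_div_mul_one_div] at h2
      have hcast : ((i + 1 : ℕ) : ℝ) = (i : ℝ) + 1 := by push_cast; ring
      rw [hcast]
      have h3 : 0 ≤ 1 / ((1 - γ) * t) := by positivity
      nlinarith [hstep, ihi, hmul]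
  have hfin := hind n2 le_rfl
  have hn1R : (1 : ℝ) ≤ (n1 : ℝ) := by exact_mod_cast hn1
  have e1 : Real.sqrt (2 * δ) * γ / (1 - γ) ^ 2 * ((n1 : ℝ) + (n2 : ℝ)) * εC
      = ((n1 : ℝ) + (n2 : ℝ)) * K := by rw [hK]; ring
  have e2 : (n2 : ℝ) * (1 / ((1 - γ) * t)) = (n2 : ℝ) / ((1 - γ) * t) := by
    rw [mul_one_div]
  rw [e1]
  nlinarith [hfin, hKnn, hn1R, e2, Nat.cast_nonneg (α := ℝ) n2]
end
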